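/- arXiv:1706.03569 — 8 statements merged into one kernel-verified Lean document; each statement's English description precedes it below -/
import Mathlib

section
/- The polynomial 31X⁴ − 36X³ + 26X² − 36X + 31 is irreducible over ℚ, and if α is a root of it, then the extension ℚ(α)/ℚ is Galois of degree 4 with Galois group cyclic of order 4. -/
open Polynomial IntermediateField

lemma monic_quad_eq {K : Type*} [Field K] {g : K[X]} (hm : g.Monic) (hd : g.natDegree = 2) :
    g = X ^ 2 + C (g.coeff 1) * X + C (g.coeff 0) := by
  ext n
  match n with
  | 0 => simp
  | 1 => simp
  | 2 =>
    have : g.coeff 2 = 1 := by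
      have := hm.coeff_natDegree
      rwa [hd] at this
    simp [this, coeff_C]
  | (n+3) =>
    have h1 : g.coeff (n+3) = 0 := coeff_eq_zero_of_natDegree_lt (by omega)
    simp [h1, coeff_C, coeff_X_pow]

lemma irred_quartic {K : Type*} [Field K] (f : K[X]) (hm : f.Monic) (hdeg : f.natDegree = 4)
    (h0 : ∀ x : K, f.eval x ≠ 0)
    (hq : ∀ a b c d : K, ¬(a + c = f.coeff 3 ∧ b + d + a * c = f.coeff 2 ∧
        a * d + b * c = f.coeff 1 ∧ b * d = f.coeff 0)) :
    Irreducible f := by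
  have hf0 : f ≠ 0 := hm.ne_zero
  have hlin : ∀ g h : K[X], f = g * h → g.natDegree ≠ 1 := by
    intro g h hf hg1
    have hgc : g.coeff 1 ≠ 0 := by
      have h1 : g.coeff 1 = g.leadingCoeff := by rw [leadingCoeff, hg1]
      rw [h1, Polynomial.leadingCoeff_ne_zero]
      intro h0'
      exact hf0 (by rw [hf, h0', zero_mul])
    have hgeq : g = C (g.coeff 1) * X + C (g.coeff 0) :=
      Polynomial.eq_X_add_C_of_natDegree_le_one (le_of_eq hg1)
    apply h0 (-(g.coeff 0) / g.coeff 1)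
    rw [hf, eval_mul]
    have hev : g.eval (-(g.coeff 0) / g.coeff 1) = 0 := by
      have key : ∀ a b : K, b ≠ 0 → g = C b * X + C a → g.eval (-a / b) = 0 := by
        intro a b hb hg
        rw [hg]
        simp only [eval_add, eval_mul, eval_C, eval_X]
        have hbb : b * (-a / b) = -a := by field_simp
        rw [hbb]
        ring
      exact key _ _ hgc hgeq
    rw [hev, zero_mul]
  constructor
  · intro hu
    have := Polynomial.natDegree_eq_zero_of_isUnit hu
    omega
  intro g h hf
  by_contra hcon
  push_neg at hcon
  obtain ⟨hgu, hhu⟩ := hcon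
  have hg0 : g ≠ 0 := fun h0' => hf0 (by rw [hf, h0', zero_mul])
  have hh0 : h ≠ 0 := fun h0' => hf0 (by rw [hf, h0', mul_zero])
  have hsum : g.natDegree + h.natDegree = 4 := by
    rw [← Polynomial.natDegree_mul hg0 hh0, ← hf, hdeg]
  have hunit0 : ∀ u : K[X], u ≠ 0 → u.natDegree = 0 → IsUnit u := by
    intro u hu0 huz
    rw [Polynomial.eq_C_of_natDegree_eq_zero huz]
    refine Polynomial.isUnit_C.mpr (isUnit_iff_ne_zero.mpr ?_)
    intro hc
    exact hu0 (by rw [Polynomial.eq_C_of_natDegree_eq_zero huz, hc, map_zero])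
  have hg1 : g.natDegree ≠ 0 := fun hz => hgu (hunit0 g hg0 hz)
  have hh1 : h.natDegree ≠ 0 := fun hz => hhu (hunit0 h hh0 hz)
  have hgne1 : g.natDegree ≠ 1 := hlin g h hf
  have hhne1 : h.natDegree ≠ 1 := hlin h g (by rw [hf, mul_comm])
  have hg2 : g.natDegree = 2 := by omega
  have hh2 : h.natDegree = 2 := by omega
  -- normalize to monic
  set u := g.leadingCoeff with hu_def
  have hu0 : u ≠ 0 := Polynomial.leadingCoeff_ne_zero.mpr hg0
  set g' := C u⁻¹ * g with hg'_def
  set h' := C u * h with hh'_def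
  have hf' : f = g' * h' := by
    rw [hg'_def, hh'_def, hf]
    rw [mul_mul_mul_comm, ← C_mul, inv_mul_cancel₀ hu0, C_1, one_mul]
  have hg'm : g'.Monic := by
    have : g'.leadingCoeff = 1 := by
      rw [hg'_def, Polynomial.leadingCoeff_mul, Polynomial.leadingCoeff_C,
        inv_mul_cancel₀ hu0]
    exact this
  have hg'd : g'.natDegree = 2 := by
    rw [hg'_def, Polynomial.natDegree_C_mul (inv_ne_zero hu0), hg2]
  have hh'm : h'.Monic := by
    have h1 : (g' * h').leadingCoeff = 1 := by rw [← hf']; exact hm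
    rw [Polynomial.leadingCoeff_mul, hg'm.leadingCoeff, one_mul] at h1
    exact h1
  have hh'd : h'.natDegree = 2 := by
    rw [hh'_def, Polynomial.natDegree_C_mul hu0, hh2]
  have hgeq := monic_quad_eq hg'm hg'd
  have hheq := monic_quad_eq hh'm hh'd
  set a := g'.coeff 1; set b := g'.coeff 0; set c := h'.coeff 1; set d := h'.coeff 0
  apply hq a b c d
  have hexp : f = X^4 + C (a + c) * X^3 + C (b + d + a*c) * X^2 + C (a*d + b*c) * X + C (b*d) := by
    rw [hf', hgeq, hheq]
    simp only [map_add, map_mul]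
    ring
  refine ⟨?_, ?_, ?_, ?_⟩ <;>
    · rw [hexp]
      simp only [coeff_add, coeff_C_mul, coeff_X_pow, coeff_C, coeff_X]
      norm_num

noncomputable def QZ : ℤ[X] := X^4 + C (-36) * X^3 + C 806 * X^2 + C (-34596) * X + C 923521

lemma QZ_monic : QZ.Monic := by
  unfold QZ
  monicity!

lemma QZ_natDegree : QZ.natDegree = 4 := by
  unfold QZ
  compute_degree!

instance fact7 : Fact (Nat.Prime 7) := ⟨by norm_num⟩

lemma QZ_mod7 : QZ.map (Int.castRingHom (ZMod 7)) =
    X^4 + C 6 * X^3 + C 1 * X^2 + C 5 * X + C 4 := by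
  have h1 : ((-36 : ℤ) : ZMod 7) = 6 := by decide
  have h2 : ((806 : ℤ) : ZMod 7) = 1 := by decide
  have h3 : ((-34596 : ℤ) : ZMod 7) = 5 := by decide
  have h4 : ((923521 : ℤ) : ZMod 7) = 4 := by decide
  simp only [QZ, Polynomial.map_add, Polynomial.map_mul, Polynomial.map_pow,
    Polynomial.map_X, Polynomial.map_C, Int.coe_castRingHom]
  rw [h1, h2, h3, h4]

lemma QZ_mod7_irred : Irreducible (QZ.map (Int.castRingHom (ZMod 7))) := by
  rw [QZ_mod7]
  have hm : (X^4 + C 6 * X^3 + C 1 * X^2 + C 5 * X + C 4 : (ZMod 7)[X]).Monic := by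
    have := QZ_monic.map (Int.castRingHom (ZMod 7))
    rwa [QZ_mod7] at this
  have hd : (X^4 + C 6 * X^3 + C 1 * X^2 + C 5 * X + C 4 : (ZMod 7)[X]).natDegree = 4 := by
    have := QZ_monic.natDegree_map (Int.castRingHom (ZMod 7))
    rwa [QZ_mod7, QZ_natDegree] at this
  apply irred_quartic _ hm hd
  · intro x
    simp only [eval_add, eval_mul, eval_pow, eval_C, eval_X]
    revert x
    decide
  · have c3 : (X^4 + C 6 * X^3 + C 1 * X^2 + C 5 * X + C 4 : (ZMod 7)[X]).coeff 3 = 6 := by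
      simp only [coeff_add, coeff_C_mul, coeff_X_pow, coeff_C, coeff_X]
      norm_num
    have c2 : (X^4 + C 6 * X^3 + C 1 * X^2 + C 5 * X + C 4 : (ZMod 7)[X]).coeff 2 = 1 := by
      simp only [coeff_add, coeff_C_mul, coeff_X_pow, coeff_C, coeff_X]
      norm_num
    have c1 : (X^4 + C 6 * X^3 + C 1 * X^2 + C 5 * X + C 4 : (ZMod 7)[X]).coeff 1 = 5 := by
      simp only [coeff_add, coeff_C_mul, coeff_X_pow, coeff_C, coeff_X]
      norm_num
    have c0 : (X^4 + C 6 * X^3 + C 1 * X^2 + C 5 * X + C 4 : (ZMod 7)[X]).coeff 0 = 4 := by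
      simp only [coeff_add, coeff_C_mul, coeff_X_pow, coeff_C, coeff_X]
      norm_num
    rw [c3, c2, c1, c0]
    decide

lemma QZ_irred : Irreducible QZ :=
  QZ_monic.irreducible_of_irreducible_map _ _ QZ_mod7_irred

lemma QQ_irred : Irreducible (QZ.map (Int.castRingHom ℚ)) :=
  (Polynomial.IsPrimitive.Int.irreducible_iff_irreducible_map_cast QZ_monic.isPrimitive).mp QZ_irred

noncomputable abbrev pQ : ℚ[X] := C 31 * X ^ 4 - C 36 * X ^ 3 + C 26 * X ^ 2 - C 36 * X + C 31

set_option maxHeartbeats 1000000 in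
lemma mindeg4 (α : AlgebraicClosure ℚ) (hroot : aeval α pQ = 0) :
    (minpoly ℚ α).natDegree = 4 := by
  haveI : CharZero (AlgebraicClosure ℚ) :=
    charZero_of_injective_algebraMap (algebraMap ℚ (AlgebraicClosure ℚ)).injective
  set QQ : ℚ[X] := QZ.map (Int.castRingHom ℚ) with hQQ_def
  have hQQ_monic : QQ.Monic := QZ_monic.map _
  have hQQ_deg : QQ.natDegree = 4 := by
    rw [hQQ_def, QZ_monic.natDegree_map, QZ_natDegree]
  have hp_deg : pQ.natDegree = 4 := by unfold pQ; compute_degree!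
  have hp_ne : pQ ≠ 0 := fun h => by simp [h] at hp_deg
  have hroot' : (31 : AlgebraicClosure ℚ) * α^4 - 36 * α^3 + 26 * α^2 - 36 * α + 31 = 0 := by
    have h := hroot
    simp only [pQ, map_add, map_sub, map_mul, map_pow, aeval_C, aeval_X, map_ofNat] at h
    linear_combination h
  have halg : IsIntegral ℚ α := (isAlgebraic_iff_isIntegral (K := ℚ)).mp ⟨pQ, hp_ne, hroot⟩
  set γ : AlgebraicClosure ℚ := (31 : AlgebraicClosure ℚ) * α with hγ_def
  have hγroot : aeval γ QQ = 0 := by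
    rw [hQQ_def, ← algebraMap_int_eq, aeval_map_algebraMap]
    unfold QZ
    simp only [map_add, map_mul, map_pow, aeval_C, aeval_X, eq_intCast, map_intCast]
    push_cast
    linear_combination (29791 : AlgebraicClosure ℚ) * hroot'
  have hγint : IsIntegral ℚ γ := ⟨QQ, hQQ_monic, hγroot⟩
  have hγmin : minpoly ℚ γ = QQ :=
    (minpoly.eq_of_irreducible_of_monic QQ_irred hγroot hQQ_monic).symm
  have h31 : (31 : AlgebraicClosure ℚ) ≠ 0 := by norm_num
  have hfields : ℚ⟮α⟯ = ℚ⟮γ⟯ := by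
    apply le_antisymm
    · rw [adjoin_le_iff]
      intro x hx
      rw [Set.mem_singleton_iff] at hx
      subst hx
      have hmem : γ ∈ ℚ⟮γ⟯ := mem_adjoin_simple_self ℚ γ
      have h2 : (31⁻¹ : ℚ) • γ ∈ ℚ⟮γ⟯ := ℚ⟮γ⟯.smul_mem hmem
      rw [SetLike.mem_coe]
      convert h2 using 1
      rw [Algebra.smul_def, hγ_def, map_inv₀]
      rw [show (algebraMap ℚ (AlgebraicClosure ℚ)) 31 = (31 : AlgebraicClosure ℚ) by norm_num]
      field_simp
    · rw [adjoin_le_iff]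
      intro x hx
      rw [Set.mem_singleton_iff] at hx
      subst hx
      have hmem : α ∈ ℚ⟮α⟯ := mem_adjoin_simple_self ℚ α
      have h2 : (31 : ℚ) • α ∈ ℚ⟮α⟯ := ℚ⟮α⟯.smul_mem hmem
      convert h2 using 1
      rw [Algebra.smul_def, hγ_def]
      norm_num
  have hrank : Module.finrank ℚ ℚ⟮α⟯ = 4 := by
    rw [hfields, adjoin.finrank hγint, hγmin, hQQ_deg]
  rw [← adjoin.finrank halg, hrank]

set_option maxHeartbeats 1000000 in
theorem p_irred : Irreducible pQ := by
  haveI : CharZero (AlgebraicClosure ℚ) :=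
    charZero_of_injective_algebraMap (algebraMap ℚ (AlgebraicClosure ℚ)).injective
  have hp_deg : pQ.natDegree = 4 := by unfold pQ; compute_degree!
  have hp_ne : pQ ≠ 0 := fun h => by simp [h] at hp_deg
  obtain ⟨α, hα⟩ : ∃ x : AlgebraicClosure ℚ, eval x (pQ.map (algebraMap ℚ (AlgebraicClosure ℚ))) = 0 := by
    have hdeg' : (pQ.map (algebraMap ℚ (AlgebraicClosure ℚ))).degree ≠ 0 := by
      rw [degree_map, Polynomial.degree_eq_natDegree hp_ne, hp_deg]
      norm_num
    exact IsAlgClosed.exists_root _ hdeg'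
  have hroot : aeval α pQ = 0 := by rwa [aeval_def, ← eval_map]
  have halg : IsIntegral ℚ α := (isAlgebraic_iff_isIntegral (K := ℚ)).mp ⟨pQ, hp_ne, hroot⟩
  have hmindeg : (minpoly ℚ α).natDegree = 4 := mindeg4 α hroot
  obtain ⟨c, hc⟩ : minpoly ℚ α ∣ pQ := minpoly.dvd ℚ α hroot
  have hmin_ne : minpoly ℚ α ≠ 0 := minpoly.ne_zero halg
  have hc_ne : c ≠ 0 := fun h => hp_ne (by rw [hc, h, mul_zero])
  have hcdeg : c.natDegree = 0 := by
    have := Polynomial.natDegree_mul hmin_ne hc_ne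
    rw [← hc, hp_deg, hmindeg] at this
    omega
  have hcunit : IsUnit c := by
    rw [Polynomial.eq_C_of_natDegree_eq_zero hcdeg]
    exact Polynomial.isUnit_C.mpr (isUnit_iff_ne_zero.mpr (fun h => hc_ne (by
      rw [Polynomial.eq_C_of_natDegree_eq_zero hcdeg, h, map_zero])))
  rw [hc]
  exact (irreducible_mul_isUnit hcunit).mpr (minpoly.irreducible halg)

set_option maxHeartbeats 2000000 in
set_option synthInstance.maxHeartbeats 1000000 in
lemma part2 (α : AlgebraicClosure ℚ) (hroot : aeval α pQ = 0) :
    IsGalois ℚ ↥(IntermediateField.adjoin ℚ ({α} : Set (AlgebraicClosure ℚ))) ∧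
    Module.finrank ℚ ↥(IntermediateField.adjoin ℚ ({α} : Set (AlgebraicClosure ℚ))) = 4 ∧
    IsCyclic (↥(IntermediateField.adjoin ℚ ({α} : Set (AlgebraicClosure ℚ))) ≃ₐ[ℚ]
      ↥(IntermediateField.adjoin ℚ ({α} : Set (AlgebraicClosure ℚ)))) ∧
    Nat.card (↥(IntermediateField.adjoin ℚ ({α} : Set (AlgebraicClosure ℚ))) ≃ₐ[ℚ]
      ↥(IntermediateField.adjoin ℚ ({α} : Set (AlgebraicClosure ℚ)))) = 4 := by
  have hCZ : CharZero (AlgebraicClosure ℚ) :=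
    charZero_of_injective_algebraMap (algebraMap ℚ (AlgebraicClosure ℚ)).injective
  have hp_deg : pQ.natDegree = 4 := by unfold pQ; compute_degree!
  have hp_ne : pQ ≠ 0 := fun h => by simp [h] at hp_deg
  have hroot' : (31 : AlgebraicClosure ℚ) * α^4 - 36 * α^3 + 26 * α^2 - 36 * α + 31 = 0 := by
    have h := hroot
    simp only [pQ, map_add, map_sub, map_mul, map_pow, aeval_C, aeval_X, map_ofNat] at h
    linear_combination h
  have halg : IsIntegral ℚ α := (isAlgebraic_iff_isIntegral (K := ℚ)).mp ⟨pQ, hp_ne, hroot⟩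
  -- ### degree of the minimal polynomial is 4
  have hmindeg : (minpoly ℚ α).natDegree = 4 := mindeg4 α hroot
  haveI hFD : FiniteDimensional ℚ ℚ⟮α⟯ := IntermediateField.adjoin.finiteDimensional halg
  have hrank : Module.finrank ℚ ℚ⟮α⟯ = 4 := by rw [adjoin.finrank halg, hmindeg]
  -- ### the structure of the factorization of minpoly
  obtain ⟨c, hc⟩ : minpoly ℚ α ∣ pQ := minpoly.dvd ℚ α hroot
  have hmin_ne : minpoly ℚ α ≠ 0 := minpoly.ne_zero halg
  have hc_ne : c ≠ 0 := fun h => hp_ne (by rw [hc, h, mul_zero])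
  have hcdeg : c.natDegree = 0 := by
    have := Polynomial.natDegree_mul hmin_ne hc_ne
    rw [← hc, hp_deg, hmindeg] at this
    omega
  obtain ⟨u, hu⟩ : ∃ u : ℚ, c = C u := ⟨c.coeff 0, Polynomial.eq_C_of_natDegree_eq_zero hcdeg⟩
  have hu_ne : u ≠ 0 := fun h => hc_ne (by rw [hu, h, map_zero])
  -- ### set up the four roots inside K = ℚ⟮α⟯
  set K := ℚ⟮α⟯ with hK_def
  have hKA_inj : Function.Injective (algebraMap K (AlgebraicClosure ℚ)) := (algebraMap K (AlgebraicClosure ℚ)).injective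
  set g : K := AdjoinSimple.gen ℚ α with hg_def
  have hcoe : algebraMap K (AlgebraicClosure ℚ) g = α := AdjoinSimple.algebraMap_gen ℚ α
  set W : K := 36/31 - (26/31) * g + (36/31) * g^2 - g^3 with hW_def
  set B : K := 5/12 - (25/124) * g - (295/372) * g^2 - (1/4) * g^3 with hB_def
  set S : K := -(5/12) + (5/124) * g - (137/372) * g^2 + (5/4) * g^3 with hS_def
  have hWc : algebraMap K (AlgebraicClosure ℚ) W = 36/31 - (26/31) * α + (36/31) * α^2 - α^3 := by
    simp [hW_def, map_sub, map_add, map_mul, map_pow, map_div₀, map_ofNat, hcoe]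
  have hBc : algebraMap K (AlgebraicClosure ℚ) B = 5/12 - (25/124) * α - (295/372) * α^2 - (1/4) * α^3 := by
    simp [hB_def, map_sub, map_add, map_mul, map_pow, map_div₀, map_ofNat, map_one, map_neg, hcoe]
  have hSc : algebraMap K (AlgebraicClosure ℚ) S = -(5/12) + (5/124) * α - (137/372) * α^2 + (5/4) * α^3 := by
    simp [hS_def, map_sub, map_add, map_mul, map_pow, map_div₀, map_ofNat, map_neg, hcoe]
  -- ### scalar symmetric-function identities
  have hs1 : (31 : K) * (g + W + B + S) = 36 := by
    apply hKA_inj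
    simp only [map_mul, map_add, map_ofNat, hcoe, hWc, hBc, hSc]
    ring
  have hs2 : (31 : K) * (g*W + g*B + g*S + W*B + W*S + B*S) = 26 := by
    apply hKA_inj
    simp only [map_mul, map_add, map_ofNat, hcoe, hWc, hBc, hSc]
    linear_combination ((-4519)/4464 + (-25)/248 * α + (-21)/16 * α ^ 2) * hroot'
  have hs3 : (31 : K) * (g*W*B + g*W*S + g*B*S + W*B*S) = 36 := by
    apply hKA_inj
    simp only [map_mul, map_add, map_ofNat, hcoe, hWc, hBc, hSc]
    linear_combination ((-169)/124 + (-206699)/138384 * α + (-5905)/7688 * α ^ 2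
      + (-92887)/69192 * α ^ 3 + (223)/248 * α ^ 4 + (5)/16 * α ^ 5) * hroot'
  have hs4 : (31 : K) * (g*W*B*S) = 31 := by
    apply hKA_inj
    simp only [map_mul, map_ofNat, hcoe, hWc, hBc, hSc]
    linear_combination ((-1) + (-169)/124 * α + (-33305)/69192 * α ^ 2 + (-2565)/3844 * α ^ 3
      + (-4145)/138384 * α ^ 4 + (223)/248 * α ^ 5 + (5)/16 * α ^ 6) * hroot'
  -- ### p splits in K
  have hmapp : pQ.map (algebraMap ℚ K) =
      C ((algebraMap ℚ K) pQ.leadingCoeff) *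
        (Multiset.map (fun a : K => X - C a) {g, W, B, S}).prod := by
    have hlc : pQ.leadingCoeff = 31 := by
      rw [Polynomial.leadingCoeff, hp_deg]
      unfold pQ
      simp only [coeff_add, coeff_sub, coeff_C_mul, coeff_X_pow, coeff_C, coeff_X]
      norm_num
    rw [hlc]
    have hC1 := congrArg Polynomial.C hs1
    have hC2 := congrArg Polynomial.C hs2
    have hC3 := congrArg Polynomial.C hs3
    have hC4 := congrArg Polynomial.C hs4
    simp only [map_mul, map_add, map_ofNat] at hC1 hC2 hC3 hC4
    simp only [Multiset.insert_eq_cons, Multiset.map_cons, Multiset.map_singleton,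
      Multiset.prod_cons, Multiset.prod_singleton]
    simp only [pQ, Polynomial.map_add, Polynomial.map_sub, Polynomial.map_mul,
      Polynomial.map_pow, Polynomial.map_X, Polynomial.map_C, map_ofNat, Polynomial.map_ofNat]
    linear_combination (X^3 : K[X]) * hC1 - (X^2 : K[X]) * hC2 + (X : K[X]) * hC3 - hC4
  have hsplits : (pQ.map (algebraMap ℚ K)).Splits :=
    splits_iff_exists_multiset.mpr ⟨{g, W, B, S}, by rw [leadingCoeff_map]; exact hmapp⟩
  -- ### K is a splitting field of p, hence Galois
  have pb : PowerBasis ℚ K := IntermediateField.adjoin.powerBasis halg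
  have hgroot : aeval g pQ = 0 := by
    apply hKA_inj
    rw [map_zero, ← aeval_algebraMap_apply, hcoe]
    exact hroot
  haveI hsf : IsSplittingField ℚ K pQ := by
    constructor
    · exact hsplits
    · rw [eq_top_iff, ← show Algebra.adjoin ℚ {(IntermediateField.adjoin.powerBasis halg).gen} =
        (⊤ : Subalgebra ℚ K) from (IntermediateField.adjoin.powerBasis halg).adjoin_gen_eq_top]
      apply Algebra.adjoin_mono
      intro x hx
      rw [Set.mem_singleton_iff] at hx
      subst hx
      rw [IntermediateField.adjoin.powerBasis_gen]
      exact (Polynomial.mem_rootSet).mpr ⟨hp_ne, hgroot⟩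
  haveI hnormal : Normal ℚ K := Normal.of_isSplittingField pQ
  haveI hgalois : IsGalois ℚ K := ⟨⟩
  have hcard : Fintype.card (K ≃ₐ[ℚ] K) = 4 := by
    rw [← Nat.card_eq_fintype_card, IsGalois.card_aut_eq_finrank, hrank]
  -- ### construct the order-4 automorphism
  have hBproot : aeval B pQ = 0 := by
    apply hKA_inj
    rw [map_zero, ← aeval_algebraMap_apply, hBc]
    simp only [pQ, map_add, map_sub, map_mul, map_pow, aeval_C, aeval_X, map_ofNat]
    linear_combination ((390751)/642816 + (716339)/830304 * α + (173947925)/154436544 * α ^ 2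
      + (41640151)/25739424 * α ^ 3 + (492243077)/308873088 * α ^ 4 + (23873891)/25739424 * α ^ 5
      + (56825)/184512 * α ^ 6 + (161)/2976 * α ^ 7 + (1)/256 * α ^ 8) * hroot'
  have hBmin : aeval B (minpoly ℚ (IntermediateField.adjoin.powerBasis halg).gen) = 0 := by
    rw [IntermediateField.adjoin.powerBasis_gen,
      show minpoly ℚ (AdjoinSimple.gen ℚ α : K) = minpoly ℚ α from IntermediateField.minpoly_gen ℚ α]
    have h1 : aeval B (minpoly ℚ α * C u) = 0 := by rw [← hu, ← hc]; exact hBproot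
    rw [map_mul, aeval_C] at h1
    rcases mul_eq_zero.mp h1 with h | h
    · exact h
    · exact absurd h (by simp [hu_ne])
  set σ' : K →ₐ[ℚ] K := (IntermediateField.adjoin.powerBasis halg).lift B hBmin with hσ'_def
  set σ : K ≃ₐ[ℚ] K := AlgEquiv.ofBijective σ' σ'.bijective with hσ_def
  have hσg : σ g = B := by
    show σ' g = B
    rw [hg_def, ← IntermediateField.adjoin.powerBasis_gen halg, hσ'_def]
    exact PowerBasis.lift_gen _ _ _
  have hσB : σ B = W := by
    have h1 : σ B = 5/12 - (25/124) * (σ g) - (295/372) * (σ g)^2 - (1/4) * (σ g)^3 := by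
      rw [hB_def]
      simp only [map_sub, map_add, map_mul, map_pow, map_div₀, map_ofNat, map_one]
    rw [h1, hσg]
    apply hKA_inj
    simp only [map_sub, map_add, map_mul, map_pow, map_div₀, map_ofNat, map_one, hBc, hWc]
    linear_combination ((-70309)/2214144 + (-230975)/68638464 * α + (948005)/102957696 * α ^ 2
      + (63665)/11439744 * α ^ 3 + (331)/246016 * α ^ 4 + (1)/7936 * α ^ 5) * hroot'
  have hWg : W ≠ g := by
    intro h
    have h1 : algebraMap K (AlgebraicClosure ℚ) W = algebraMap K (AlgebraicClosure ℚ) g := by rw [h]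
    rw [hWc, hcoe] at h1
    have hgW1 : α * (36/31 - (26/31) * α + (36/31) * α^2 - α^3) = 1 := by
      linear_combination (-1/31 : AlgebraicClosure ℚ) * hroot'
    have hα2 : α^2 = 1 := by
      calc α^2 = α * α := sq α
      _ = α * (36/31 - (26/31) * α + (36/31) * α^2 - α^3) := by rw [h1]
      _ = 1 := hgW1
    have h119 : α = 11/9 := by
      linear_combination (-1/72 : AlgebraicClosure ℚ) * hroot' + ((31*α^2 - 36*α + 57)/72) * hα2
    rw [h119] at hα2
    norm_num at hα2
  have hσ2 : σ ^ 2 ≠ 1 := by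
    intro h
    apply hWg
    have h1 : (σ ^ 2) g = g := by rw [h]; rfl
    rw [pow_two, AlgEquiv.mul_apply, hσg, hσB] at h1
    exact h1
  have horder : orderOf σ = 4 := by
    have hdvd : orderOf σ ∣ 4 := by
      have := orderOf_dvd_card (x := σ)
      rwa [hcard] at this
    have hnd2 : ¬ orderOf σ ∣ 2 := fun h => hσ2 (orderOf_dvd_iff_pow_eq_one.mp h)
    have hle : orderOf σ ≤ 4 := Nat.le_of_dvd (by norm_num) hdvd
    have hpos : 0 < orderOf σ := orderOf_pos σ
    interval_cases h : orderOf σ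
    · exact absurd (by norm_num) hnd2
    · exact absurd (by norm_num) hnd2
    · exact absurd hdvd (by norm_num)
    · rfl
  refine ⟨hgalois, hrank, ?_, ?_⟩
  · exact isCyclic_of_orderOf_eq_card σ (by rw [Nat.card_eq_fintype_card, hcard, horder])
  · rw [Nat.card_eq_fintype_card, hcard]

/-- The polynomial `31X⁴ - 36X³ + 26X² - 36X + 31` is irreducible over `ℚ`, and for any
root `α` of it in `ℚ̄`, the extension `ℚ(α)/ℚ` is Galois of degree `4` with cyclic
Galois group of order `4`. -/
theorem stmt_1 :
    Irreducible (C 31 * X ^ 4 - C 36 * X ^ 3 + C 26 * X ^ 2 - C 36 * X + C 31 : ℚ[X]) ∧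
    ∀ α : AlgebraicClosure ℚ,
      aeval α (C 31 * X ^ 4 - C 36 * X ^ 3 + C 26 * X ^ 2 - C 36 * X + C 31 : ℚ[X]) = 0 →
      IsGalois ℚ ↥(IntermediateField.adjoin ℚ ({α} : Set (AlgebraicClosure ℚ))) ∧
      Module.finrank ℚ ↥(IntermediateField.adjoin ℚ ({α} : Set (AlgebraicClosure ℚ))) = 4 ∧
      IsCyclic (↥(IntermediateField.adjoin ℚ ({α} : Set (AlgebraicClosure ℚ))) ≃ₐ[ℚ]
        ↥(IntermediateField.adjoin ℚ ({α} : Set (AlgebraicClosure ℚ)))) ∧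
      Nat.card (↥(IntermediateField.adjoin ℚ ({α} : Set (AlgebraicClosure ℚ))) ≃ₐ[ℚ]
        ↥(IntermediateField.adjoin ℚ ({α} : Set (AlgebraicClosure ℚ)))) = 4 := by
  exact ⟨p_irred, fun α h => part2 α h⟩
end

section
/- Let K be a number field of degree 4 over ℚ and let x, y ∈ K with xy ≠ 0, x⁵ + y⁵ + 1 = 0, and ℚ(x, y) = K. Suppose the affine point (x, y) lies on a line defined over ℚ through the point (0, −1), i.e., there exist λ, μ ∈ ℚ, not both zero, with λx + μ(y+1) = 0. Then K = ℚ(y), and there exists t ∈ ℚ with t ≠ −1 such that x = t(y+1) and y⁴ + u y³ + (u+2) y² + u y + 1 = 0, where u = (4t⁵ − 1)/(t⁵ + 1). -/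
set_option maxHeartbeats 1000000

/-- If `K` is a quartic number field, `(x, y)` an affine point of the Fermat quintic with
`xy ≠ 0` and `ℚ(x,y) = K`, lying on a rational line through `(0, -1)`, then `K = ℚ(y)`
and there is `t ∈ ℚ`, `t ≠ -1`, with `x = t(y+1)` and
`y⁴ + uy³ + (u+2)y² + uy + 1 = 0` where `u = (4t⁵-1)/(t⁵+1)`. -/
theorem stmt_6 (K : Type*) [Field K] [NumberField K]
    (hdeg : Module.finrank ℚ K = 4)
    (x y : K) (hxy : x * y ≠ 0) (hF : x ^ 5 + y ^ 5 + 1 = 0)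
    (hgen : IntermediateField.adjoin ℚ ({x, y} : Set K) = ⊤)
    (hline : ∃ l m : ℚ, (l ≠ 0 ∨ m ≠ 0) ∧
      algebraMap ℚ K l * x + algebraMap ℚ K m * (y + 1) = 0) :
    IntermediateField.adjoin ℚ ({y} : Set K) = ⊤ ∧
    ∃ t : ℚ, t ≠ -1 ∧ x = algebraMap ℚ K t * (y + 1) ∧
      y ^ 4 + algebraMap ℚ K ((4 * t ^ 5 - 1) / (t ^ 5 + 1)) * y ^ 3 +
        algebraMap ℚ K ((4 * t ^ 5 - 1) / (t ^ 5 + 1) + 2) * y ^ 2 +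
        algebraMap ℚ K ((4 * t ^ 5 - 1) / (t ^ 5 + 1)) * y + 1 = 0 := by
  have hx0 : x ≠ 0 := fun h => hxy (by rw [h, zero_mul])
  have hy0 : y ≠ 0 := fun h => hxy (by rw [h, mul_zero])
  have hy1 : y + 1 ≠ 0 := by
    intro h
    have hy : y = -1 := by linear_combination h
    apply hx0
    have : x ^ 5 = 0 := by rw [hy] at hF; linear_combination hF
    exact pow_eq_zero_iff (by norm_num) |>.mp this
  obtain ⟨l, m, hlm, hl⟩ := hline
  have hl0 : l ≠ 0 := by
    rintro rfl
    rcases hlm with h | hm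
    · exact h rfl
    · apply hy1
      have : algebraMap ℚ K m * (y + 1) = 0 := by
        simpa using hl
      rcases mul_eq_zero.mp this with h | h
      · exact absurd ((map_eq_zero _).mp h) hm
      · exact h
  have halg : (algebraMap ℚ K l) ≠ 0 := (map_ne_zero _).mpr hl0
  set t : ℚ := -m / l with ht
  have hlt : l * t = -m := by rw [ht]; field_simp
  have hx : x = algebraMap ℚ K t * (y + 1) := by
    apply mul_left_cancel₀ halg
    rw [← mul_assoc, ← map_mul, hlt, map_neg]
    linear_combination hl
  have hKy : IntermediateField.adjoin ℚ ({y} : Set K) = ⊤ := by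
    rw [eq_top_iff, ← hgen]
    apply IntermediateField.adjoin_le_iff.mpr
    intro z hz
    have hymem : y ∈ IntermediateField.adjoin ℚ ({y} : Set K) :=
      IntermediateField.subset_adjoin ℚ _ rfl
    rcases hz with h | h
    · rw [h, hx]
      exact mul_mem (IntermediateField.algebraMap_mem _ _) (add_mem hymem (one_mem _))
    · rw [Set.mem_singleton_iff] at h
      rw [h]; exact hymem
  set a : K := algebraMap ℚ K t with ha
  have hQ : (a ^ 5 + 1) * y ^ 4 + (4 * a ^ 5 - 1) * y ^ 3 + (6 * a ^ 5 + 1) * y ^ 2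
      + (4 * a ^ 5 - 1) * y + (a ^ 5 + 1) = 0 := by
    have hF' : a ^ 5 * (y + 1) ^ 5 + y ^ 5 + 1 = 0 := by rw [hx] at hF; linear_combination hF
    have h2 : (y + 1) * ((a ^ 5 + 1) * y ^ 4 + (4 * a ^ 5 - 1) * y ^ 3 + (6 * a ^ 5 + 1) * y ^ 2
        + (4 * a ^ 5 - 1) * y + (a ^ 5 + 1)) = 0 := by linear_combination hF'
    rcases mul_eq_zero.mp h2 with h | h
    · exact absurd h hy1
    · exact h
  have ht1 : t ≠ -1 := by
    rintro h1
    have ha1 : a = -1 := by rw [ha, h1]; simp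
    have hcube : y ^ 2 + y + 1 = 0 := by
      rw [ha1] at hQ
      have h5 : y * (y ^ 2 + y + 1) = 0 := by linear_combination (-1/5 : K) * hQ
      rcases mul_eq_zero.mp h5 with h | h
      · exact absurd h hy0
      · exact h
    have hint : IsIntegral ℚ y := IsIntegral.of_finite ℚ y
    have hfin : Module.finrank ℚ (IntermediateField.adjoin ℚ ({y} : Set K)) = 4 := by
      rw [hKy, IntermediateField.finrank_top', hdeg]
    have hle : (minpoly ℚ y).natDegree ≤ 2 := by
      set p : Polynomial ℚ := Polynomial.X ^ 2 + Polynomial.X + 1 with hp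
      have hp0 : p ≠ 0 := by
        intro h
        have := congrArg (Polynomial.eval 0) h
        simp [hp] at this
      have haev : Polynomial.aeval y p = 0 := by
        rw [hp]
        simp only [map_add, map_pow, Polynomial.aeval_X, map_one]
        linear_combination hcube
      have hdle := minpoly.degree_le_of_ne_zero ℚ y hp0 haev
      have hdp : p.degree ≤ 2 := by rw [hp]; compute_degree
      exact Polynomial.natDegree_le_iff_degree_le.mpr (hdle.trans hdp)
    rw [IntermediateField.adjoin.finrank hint] at hfin
    omega
  have ht5 : t ^ 5 + 1 ≠ 0 := by
    intro h
    apply ht1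
    nlinarith [sq_nonneg (t + 1), sq_nonneg (t - 1), sq_nonneg (t ^ 2 - 1), sq_nonneg (t ^ 2 + t),
      sq_nonneg t, sq_nonneg (t ^ 2 - t - 1), sq_nonneg (t ^ 2 + t - 1)]
  have ha5 : a ^ 5 + 1 ≠ 0 := by
    rw [ha, ← map_pow, ← map_one (algebraMap ℚ K), ← map_add]
    exact (map_ne_zero _).mpr ht5
  refine ⟨hKy, t, ht1, hx, ?_⟩
  have hu : algebraMap ℚ K ((4 * t ^ 5 - 1) / (t ^ 5 + 1)) = (4 * a ^ 5 - 1) / (a ^ 5 + 1) := by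
    rw [map_div₀, map_sub, map_add, map_mul, map_pow, map_one, ha]
    norm_num
  rw [map_add, hu]
  rw [show ((algebraMap ℚ K) 2 : K) = 2 by norm_num]
  field_simp
  linear_combination hQ
end

section
/- Let K be a number field that is Galois of degree 4 over ℚ, and let x, y ∈ K with xy ≠ 0, x⁵ + y⁵ + 1 = 0, and ℚ(x, y) = K. Let t ∈ ℚ be such that x = t(y+1). Then at least one of the following holds: (1) 5(16t⁵ + 1) is a square in ℚ; (2) (1 − 4t⁵)(16t⁵ + 1) is a square in ℚ. -/
open Polynomial in
/-- If `K` is a Galois quartic number field containing a non-trivial affine point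
`(x, y)` of the Fermat quintic generating `K`, lying on the rational line `x = t(y+1)`,
then `5(16t⁵+1)` or `(1-4t⁵)(16t⁵+1)` is a square in `ℚ`. -/
theorem stmt_9 (K : Type*) [Field K] [NumberField K] [IsGalois ℚ K]
    (hdeg : Module.finrank ℚ K = 4)
    (x y : K) (hxy : x * y ≠ 0) (hF : x ^ 5 + y ^ 5 + 1 = 0)
    (hgen : IntermediateField.adjoin ℚ ({x, y} : Set K) = ⊤)
    (t : ℚ) (ht : x = algebraMap ℚ K t * (y + 1)) :
    (∃ s : ℚ, s ^ 2 = 5 * (16 * t ^ 5 + 1)) ∨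
    (∃ s : ℚ, s ^ 2 = (1 - 4 * t ^ 5) * (16 * t ^ 5 + 1)) := by
  have inj : Function.Injective (algebraMap ℚ K) := (algebraMap ℚ K).injective
  have hy0 : y ≠ 0 := fun h => hxy (by simp [h])
  have hx0 : x ≠ 0 := fun h => hxy (by simp [h])
  have hy1 : y + 1 ≠ 0 := fun h => hx0 (by rw [ht, h, mul_zero])
  -- K = Q(y)
  have htop : IntermediateField.adjoin ℚ ({y} : Set K) = ⊤ := by
    refine top_le_iff.mp ?_
    rw [← hgen]
    refine IntermediateField.adjoin_le_iff.mpr ?_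
    intro z hz
    rcases hz with hz | hz
    · subst hz
      rw [ht]
      exact mul_mem (IntermediateField.algebraMap_mem _ _)
        (add_mem (IntermediateField.subset_adjoin _ _ rfl) (one_mem _))
    · simp only [Set.mem_singleton_iff] at hz
      subst hz
      exact IntermediateField.subset_adjoin _ _ rfl
  have hint : IsIntegral ℚ y := IsIntegral.of_finite ℚ y
  have hd4 : (minpoly ℚ y).natDegree = 4 := by
    have h := IntermediateField.adjoin.finrank hint
    rw [htop] at h
    rw [← h, ← hdeg]
    exact (IntermediateField.topEquiv (F := ℚ) (E := K)).toLinearEquiv.finrank_eq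
  -- y satisfies no monic rational quadratic
  have hquad : ∀ q r : ℚ, y^2 + algebraMap ℚ K q * y + algebraMap ℚ K r ≠ 0 := by
    intro q r h
    have hp : (X^2 + C q * X + C r : ℚ[X]) ≠ 0 := by
      intro h0
      have : ((X^2 + C q * X + C r : ℚ[X])).coeff 2 = 0 := by rw [h0]; simp
      simp [coeff_X_pow] at this
    have hroot : Polynomial.aeval y (X^2 + C q * X + C r : ℚ[X]) = 0 := by
      simpa using h
    have hle := minpoly.degree_le_of_ne_zero ℚ y hp hroot
    have hdeg2 : (X^2 + C q * X + C r : ℚ[X]).degree ≤ 2 := by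
      compute_degree
    have h4 : (minpoly ℚ y).degree = 4 := by
      rw [Polynomial.degree_eq_natDegree (minpoly.ne_zero hint), hd4]; rfl
    rw [h4] at hle
    have := hle.trans hdeg2
    norm_num at this
  have hyinv : y * y⁻¹ = 1 := mul_inv_cancel₀ hy0
  have hysq : y^2 ≠ 1 := by
    intro h
    apply hquad 0 (-1)
    rw [map_zero, map_neg, map_one]
    linear_combination h
  have hyy : y ≠ y⁻¹ := by
    intro h
    apply hysq
    rw [pow_two]
    nth_rewrite 2 [h]
    exact hyinv
  -- the quartic satisfied by y
  have hQ : (algebraMap ℚ K t)^5*(y+1)^4 + (y^4 - y^3 + y^2 - y + 1) = 0 := by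
    have h5 : (y+1) * ((algebraMap ℚ K t)^5*(y+1)^4 + (y^4 - y^3 + y^2 - y + 1)) = 0 := by
      rw [ht] at hF
      linear_combination hF
    exact (mul_eq_zero.mp h5).resolve_left hy1
  set T : K := algebraMap ℚ K t with hT_def
  have ha : t^5 + 1 ≠ 0 := by
    intro h
    have hT : T^5 + 1 = 0 := by
      rw [hT_def, ← map_pow, ← map_one (algebraMap ℚ K), ← map_add, h, map_zero]
    have h2 : (5:K)*(y*(y^2+y+1)) = 0 := by
      linear_combination (-1) * hQ + (y+1)^4 * hT
    have h3 : y^2+y+1 = 0 := by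
      rcases mul_eq_zero.mp h2 with h' | h'
      · exact absurd h' (by norm_num)
      · rcases mul_eq_zero.mp h' with h'' | h''
        · exact absurd h'' hy0
        · exact h''
    exact hquad 1 1 (by rw [map_one]; linear_combination h3)
  set A : K := algebraMap ℚ K (t^5+1) with hA_def
  set B : K := algebraMap ℚ K (4*t^5-1) with hB_def
  have hA0 : A ≠ 0 := fun h => ha (inj (by rw [map_zero]; exact h))
  have hAT : A = T^5 + 1 := by rw [hA_def, map_add, map_pow, map_one]
  have hBT : B = 4*T^5 - 1 := by
    rw [hB_def, map_sub, map_mul, map_pow, map_one, map_ofNat]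
  have hgA : ∀ g : K ≃ₐ[ℚ] K, g A = A := fun g => by rw [hA_def]; exact g.commutes _
  have hgB : ∀ g : K ≃ₐ[ℚ] K, g B = B := fun g => by rw [hB_def]; exact g.commutes _
  set w : K := y + y⁻¹ with hw_def
  have h1 : A*w^2 + B*w + B = 0 := by
    have hy2 : (y:K)^2 ≠ 0 := pow_ne_zero _ hy0
    apply mul_left_cancel₀ hy2
    rw [mul_zero, hw_def, hAT, hBT]
    linear_combination hQ + (((T^5+1))*(2*y^2 + y*y⁻¹ + 1) + (4*T^5-1)*y) * hyinv
  -- rational elements are exactly the fixed ones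
  have hfixrat : ∀ z : K, (∀ g : K ≃ₐ[ℚ] K, g z = z) → ∃ q : ℚ, algebraMap ℚ K q = z := by
    intro z hz
    have hmem : z ∈ IntermediateField.fixedField
        (IntermediateField.fixingSubgroup (⊥ : IntermediateField ℚ K)) := fun g => hz g.1
    rw [IsGalois.fixedField_fixingSubgroup] at hmem
    exact IntermediateField.mem_bot.mp hmem
  -- an automorphism moving w
  have hexσ : ∃ σ : K ≃ₐ[ℚ] K, σ w ≠ w := by
    by_contra hc
    push_neg at hc
    obtain ⟨q, hq⟩ := hfixrat w hc
    apply hquad (-q) 1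
    rw [map_neg, map_one]
    have : algebraMap ℚ K q * y = y^2 + 1 := by
      rw [hq, hw_def]
      linear_combination hyinv
    linear_combination -this
  obtain ⟨σ, hσw⟩ := hexσ
  -- automorphisms are determined by the image of y
  have Lfix : ∀ g : K ≃ₐ[ℚ] K, g y = y → ∀ z : K, g z = z := by
    intro g hg z
    have hz : z ∈ IntermediateField.adjoin ℚ ({y} : Set K) := by rw [htop]; trivial
    induction hz using IntermediateField.adjoin_induction with
    | mem a ha => rw [Set.mem_singleton_iff] at ha; rw [ha]; exact hg
    | algebraMap a => exact g.commutes a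
    | add a b _ _ ha hb => rw [map_add, ha, hb]
    | inv a _ ha => rw [map_inv₀, ha]
    | mul a b _ _ ha hb => rw [map_mul, ha, hb]
  have L3 : ∀ g h : K ≃ₐ[ℚ] K, g y = h y → ∀ z, g z = h z := by
    intro g h hgh z
    have hk : (g.trans h.symm) y = y := by
      simp only [AlgEquiv.trans_apply, hgh, AlgEquiv.symm_apply_apply]
    have h2 := Lfix _ hk z
    simp only [AlgEquiv.trans_apply] at h2
    have := congrArg h h2
    rwa [AlgEquiv.apply_symm_apply] at this
  set w' : K := σ w with hw'_def
  set y' : K := σ y with hy'_def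
  have hy'0 : y' ≠ 0 := fun h => hy0 (by
    have := congrArg σ.symm h
    rwa [hy'_def, AlgEquiv.symm_apply_apply, map_zero] at this)
  have hy'inv : y' * y'⁻¹ = 1 := mul_inv_cancel₀ hy'0
  have hy'sq : y'^2 ≠ 1 := fun h => hysq (by
    have := congrArg σ.symm h
    rwa [hy'_def, ← map_pow, AlgEquiv.symm_apply_apply, map_one] at this)
  have hy'y' : y' ≠ y'⁻¹ := by
    intro h
    apply hy'sq
    rw [pow_two]
    nth_rewrite 2 [h]
    exact hy'inv
  have hw'y : w' = y' + y'⁻¹ := by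
    rw [hw'_def, hw_def, map_add, map_inv₀, ← hy'_def]
  have h1' : A*w'^2 + B*w' + B = 0 := by
    have := congrArg σ h1
    simpa only [map_add, map_mul, map_pow, map_zero, hgA, hgB, ← hw'_def] using this
  have hsum : A * w' = -(A*w + B) := by
    have hfac : (w - w') * (A*(w+w') + B) = 0 := by linear_combination h1 - h1'
    rcases mul_eq_zero.mp hfac with h | h
    · exact absurd (sub_eq_zero.mp h).symm hσw
    · linear_combination h
  have hprod : A*(w*w') = B := by linear_combination w*hsum - h1
  have quad_roots : ∀ z : K, A*z^2 + B*z + B = 0 → z = w ∨ z = w' := by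
    intro z hz
    have hfac : A*((z-w)*(z-w')) = 0 := by linear_combination hz - z*hsum + hprod
    rcases mul_eq_zero.mp hfac with h | h
    · exact absurd h hA0
    · rcases mul_eq_zero.mp h with h' | h'
      · exact Or.inl (sub_eq_zero.mp h')
      · exact Or.inr (sub_eq_zero.mp h')
  have hyw : y^2 - w*y + 1 = 0 := by rw [hw_def]; linear_combination -hyinv
  have hy'w : y'^2 - w'*y' + 1 = 0 := by
    have := congrArg σ hyw
    simpa only [map_add, map_sub, map_mul, map_pow, map_one, map_zero, ← hw'_def,
      ← hy'_def] using this
  have quad_roots_y : ∀ z : K, z^2 - w*z + 1 = 0 → z = y ∨ z = y⁻¹ := by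
    intro z hz
    have hfac : (z-y)*(z-y⁻¹) = 0 := by
      rw [hw_def] at hz
      linear_combination hz + hyinv
    rcases mul_eq_zero.mp hfac with h | h
    · exact Or.inl (sub_eq_zero.mp h)
    · exact Or.inr (sub_eq_zero.mp h)
  have quad_roots_y' : ∀ z : K, z^2 - w'*z + 1 = 0 → z = y' ∨ z = y'⁻¹ := by
    intro z hz
    have hfac : (z-y')*(z-y'⁻¹) = 0 := by
      rw [hw'y] at hz
      linear_combination hz + hy'inv
    rcases mul_eq_zero.mp hfac with h | h
    · exact Or.inl (sub_eq_zero.mp h)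
    · exact Or.inr (sub_eq_zero.mp h)
  have hgw_mem : ∀ g : K ≃ₐ[ℚ] K, g w = w ∨ g w = w' := by
    intro g
    refine quad_roots _ ?_
    have := congrArg g h1
    simpa only [map_add, map_mul, map_pow, map_zero, hgA, hgB] using this
  have hgw'_mem : ∀ g : K ≃ₐ[ℚ] K, g w' = w ∨ g w' = w' := by
    intro g
    refine quad_roots _ ?_
    have := congrArg g h1'
    simpa only [map_add, map_mul, map_pow, map_zero, hgA, hgB] using this
  have hgw'_eq1 : ∀ g : K ≃ₐ[ℚ] K, g w = w → g w' = w' := by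
    intro g h
    rcases hgw'_mem g with h' | h'
    · exact absurd (g.injective (h'.trans h.symm)) (fun hh => hσw hh)
    · exact h'
  have hgw'_eq2 : ∀ g : K ≃ₐ[ℚ] K, g w = w' → g w' = w := by
    intro g h
    rcases hgw'_mem g with h' | h'
    · exact h'
    · exact absurd (g.injective (h'.trans h.symm)) (fun hh => hσw hh)
  have hgy_of_w : ∀ g : K ≃ₐ[ℚ] K, g w = w → g y = y ∨ g y = y⁻¹ := by
    intro g hg
    refine quad_roots_y _ ?_
    have := congrArg g hyw
    simpa only [map_add, map_sub, map_mul, map_pow, map_one, map_zero, hg] using this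
  have hgy_of_w' : ∀ g : K ≃ₐ[ℚ] K, g w = w' → g y = y' ∨ g y = y'⁻¹ := by
    intro g hg
    refine quad_roots_y' _ ?_
    have := congrArg g hyw
    simpa only [map_add, map_sub, map_mul, map_pow, map_one, map_zero, hg] using this
  have hgy'_of_w : ∀ g : K ≃ₐ[ℚ] K, g w' = w → g y' = y ∨ g y' = y⁻¹ := by
    intro g hg
    refine quad_roots_y _ ?_
    have := congrArg g hy'w
    simpa only [map_add, map_sub, map_mul, map_pow, map_one, map_zero, hg, ← hy'_def]
      using this
  have hgy'_of_w' : ∀ g : K ≃ₐ[ℚ] K, g w' = w' → g y' = y' ∨ g y' = y'⁻¹ := by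
    intro g hg
    refine quad_roots_y' _ ?_
    have := congrArg g hy'w
    simpa only [map_add, map_sub, map_mul, map_pow, map_one, map_zero, hg, ← hy'_def]
      using this
  -- theta's and v
  set θ : K := y - y⁻¹ with hθ_def
  set θ' : K := y' - y'⁻¹ with hθ'_def
  set v : K := 2*A*w + B with hv_def
  have hθ2 : θ^2 = w^2 - 4 := by
    rw [hθ_def, hw_def]; linear_combination (-4) * hyinv
  have hθ'2 : θ'^2 = w'^2 - 4 := by
    rw [hθ'_def, hw'y]; linear_combination (-4) * hy'inv
  have hv2 : v^2 = B^2 - 4*A*B := by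
    rw [hv_def]; linear_combination (4*A) * h1
  have hσθ : σ θ = θ' := by
    rw [hθ_def, map_sub, map_inv₀, ← hy'_def, ← hθ'_def]
  have hkey : A * (A*(θ*θ'))^2 = A * (16*A^2 + 8*A*B - 3*B^2) := by
    linear_combination (A^3*θ'^2) * hθ2 + (A^3*(w^2-4)) * hθ'2
      + ((A*w^2-4*A)*(A*w'-A*w-B)) * hsum
      + ((A*w+B)^2 - 4*A^2 + A*(-B*w-B-4*A) - B^2) * h1
  have hAu2 : (A*(θ*θ'))^2 = 16*A^2 + 8*A*B - 3*B^2 := mul_left_cancel₀ hA0 hkey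
  have hgθ : ∀ g : K ≃ₐ[ℚ] K, g θ = g y - (g y)⁻¹ := fun g => by
    rw [hθ_def, map_sub, map_inv₀]
  have hgθ' : ∀ g : K ≃ₐ[ℚ] K, g θ' = g y' - (g y')⁻¹ := fun g => by
    rw [hθ'_def, map_sub, map_inv₀]
  have hgv : ∀ g : K ≃ₐ[ℚ] K, g v = 2*A*(g w) + B := fun g => by
    rw [hv_def, map_add, map_mul, map_mul, hgA, hgB, map_ofNat]
  have hσv : σ v = -v := by
    rw [hgv σ, ← hw'_def, hv_def]
    linear_combination 2*hsum
  -- sigma on w' and y'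
  have hσw' : σ w' = w := hgw'_eq2 σ rfl
  have hσy'mem : σ y' = y ∨ σ y' = y⁻¹ := hgy'_of_w σ hσw'
  -- the common contradiction: g y = y⁻¹ together with g y' = y' is impossible
  have C1 : ∀ g : K ≃ₐ[ℚ] K, g y = y⁻¹ → g y' = y' → False := by
    intro g hgy hgy'
    have h' : (σ.trans g) y = σ y := by
      rw [AlgEquiv.trans_apply, ← hy'_def, hgy', hy'_def]
    have hall := L3 (σ.trans g) σ h'
    have key := hall (σ.symm y)
    rw [AlgEquiv.trans_apply, AlgEquiv.apply_symm_apply] at key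
    exact hyy (key.symm.trans hgy)
  rcases hσy'mem with hc | hc
  · -- Case 1 : σ² = 1 on y ; θθ' is rational
    left
    have hfix1 : ∀ g : K ≃ₐ[ℚ] K, g (θ*θ') = θ*θ' := by
      intro g
      rcases hgw_mem g with hgw | hgw
      · rcases hgy_of_w g hgw with hgy | hgy
        · exact Lfix g hgy _
        · rcases hgy'_of_w' g (hgw'_eq1 g hgw) with hgy' | hgy'
          · exact absurd (C1 g hgy hgy') not_false
          · rw [map_mul, hgθ g, hgθ' g, hgy, hgy', inv_inv, inv_inv, hθ_def, hθ'_def]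
            ring
      · rcases hgy_of_w' g hgw with hgy | hgy
        · -- g = σ
          have hall := L3 g σ (by rw [hgy, hy'_def])
          rw [hall (θ*θ'), map_mul, hσθ]
          have hσθ' : σ θ' = θ := by
            rw [hθ'_def, map_sub, map_inv₀, hc, ← hθ_def]
          rw [hσθ']
          ring
        · rcases hgy'_of_w g (hgw'_eq2 g hgw) with hgy' | hgy'
          · -- contradiction
            exfalso
            have h' : (σ.trans g) y = y := by
              rw [AlgEquiv.trans_apply, ← hy'_def]; exact hgy'
            have hall := L3 (σ.trans g) AlgEquiv.refl (by simpa using h')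
            have key := hall y'
            simp only [AlgEquiv.trans_apply, AlgEquiv.coe_refl, id_eq] at key
            rw [hy'_def] at key
            -- key : g (σ (σ y)) = σ y  i.e. g (σ y') = y'
            rw [← hy'_def, hc] at key
            exact hy'y' ((hgy.symm.trans key).symm)
          · rw [map_mul, hgθ g, hgθ' g, hgy, hgy', inv_inv, inv_inv, hθ_def, hθ'_def]
            ring
    obtain ⟨s₀, hs₀⟩ := hfixrat _ hfix1
    refine ⟨(t^5+1) * s₀, inj ?_⟩
    have halg : algebraMap ℚ K (5*(16*t^5+1)) = 16*A^2 + 8*A*B - 3*B^2 := by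
      have e : (5*(16*t^5+1) : ℚ) =
          16*(t^5+1)^2+8*((t^5+1))*(4*t^5-1)-3*(4*t^5-1)^2 := by ring
      rw [e, hA_def, hB_def]
      simp only [map_mul, map_sub, map_add, map_pow, map_one, map_ofNat]
    rw [map_pow, map_mul, hs₀, ← hA_def, hAu2, halg]
  · -- Case 2 : σ has order 4 ; θθ'v is rational
    right
    have hfix2 : ∀ g : K ≃ₐ[ℚ] K, g (θ*θ'*v) = θ*θ'*v := by
      intro g
      rcases hgw_mem g with hgw | hgw
      · have hgvv : g v = v := by rw [hgv g, hgw, ← hv_def]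
        rcases hgy_of_w g hgw with hgy | hgy
        · exact Lfix g hgy _
        · rcases hgy'_of_w' g (hgw'_eq1 g hgw) with hgy' | hgy'
          · exact absurd (C1 g hgy hgy') not_false
          · rw [map_mul, map_mul, hgθ g, hgθ' g, hgvv, hgy, hgy', inv_inv, inv_inv,
              hθ_def, hθ'_def]
            ring
      · have hgvv : g v = -v := by
          rw [hgv g, hgw, hv_def]
          linear_combination 2*hsum
        rcases hgy_of_w' g hgw with hgy | hgy
        · -- g = σ
          have hall := L3 g σ (by rw [hgy, hy'_def])
          rw [hall (θ*θ'*v), map_mul, map_mul, hσθ, hσv]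
          have hσθ' : σ θ' = -θ := by
            rw [hθ'_def, map_sub, map_inv₀, hc, inv_inv, hθ_def]
            ring
          rw [hσθ']
          ring
        · rcases hgy'_of_w g (hgw'_eq2 g hgw) with hgy' | hgy'
          · rw [map_mul, map_mul, hgθ g, hgθ' g, hgvv, hgy, hgy', inv_inv,
              hθ_def, hθ'_def]
            ring
          · -- contradiction : g = σ³ would force g y' = y
            exfalso
            set τ : K ≃ₐ[ℚ] K := (σ.trans σ).trans σ with hτ_def
            have hτy : τ y = y'⁻¹ := by
              show σ (σ (σ y)) = y'⁻¹
              rw [← hy'_def, hc, map_inv₀, ← hy'_def]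
            have hall := L3 g τ (hgy.trans hτy.symm)
            have key := hall y'
            have hτy' : τ y' = y := by
              show σ (σ (σ y')) = y
              rw [hc, map_inv₀, ← hy'_def, map_inv₀, hc, inv_inv]
            rw [hτy'] at key
            exact hyy ((hgy'.symm.trans key).symm)
    obtain ⟨s₀, hs₀⟩ := hfixrat _ hfix2
    have h2 : ((t^5+1)*s₀)^2 = 25*((1-4*t^5)*(16*t^5+1)) := by
      apply inj
      have halg2 : (16*A^2 + 8*A*B - 3*B^2) * (B^2 - 4*A*B)
          = algebraMap ℚ K (25*((1-4*t^5)*(16*t^5+1))) := by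
        have e : (25*((1-4*t^5)*(16*t^5+1)) : ℚ) =
            (16*(t^5+1)^2+8*(t^5+1)*(4*t^5-1)-3*(4*t^5-1)^2)
            * ((4*t^5-1)^2-4*(t^5+1)*(4*t^5-1)) := by ring
        rw [e, hA_def, hB_def]
        simp only [map_mul, map_sub, map_add, map_pow, map_one, map_ofNat]
      rw [map_pow, map_mul, hs₀, ← hA_def, ← halg2, ← hAu2, ← hv2]
      ring
    exact ⟨(t^5+1)*s₀/5, by linear_combination h2/25⟩
end

section
/- Let u ∈ ℚ and let r₁, r₂, r₃, r₄ ∈ ℂ be the roots (with multiplicity) of the polynomial f = X⁴ + uX³ + (u+2)X² + uX + 1. Then the discriminant of f satisfies ∏_{1 ≤ i < j ≤ 4} (rᵢ − rⱼ)² = −u²(u − 4)³(3u + 4). Moreover, if t ∈ ℚ with t⁵ ≠ −1 and u = (4t⁵ − 1)/(t⁵ + 1), then −u²(u − 4)³(3u + 4) = 5³·(4t⁵ − 1)²·(16t⁵ + 1)/(t⁵ + 1)⁶. -/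
open Polynomial Finset

/-- The discriminant of `f = X⁴ + uX³ + (u+2)X² + uX + 1` is `-u²(u-4)³(3u+4)`, and for
`u = (4t⁵-1)/(t⁵+1)` it equals `5³(4t⁵-1)²(16t⁵+1)/(t⁵+1)⁶`. -/
theorem stmt_11 (u : ℚ) (r : Fin 4 → ℂ)
    (hroots : (X ^ 4 + C (u : ℂ) * X ^ 3 + C ((u : ℂ) + 2) * X ^ 2 + C (u : ℂ) * X + 1 :
        ℂ[X]) = ∏ i : Fin 4, (X - C (r i))) :
    (∏ p ∈ Finset.univ.filter (fun p : Fin 4 × Fin 4 => p.1 < p.2),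
        (r p.1 - r p.2) ^ 2) =
      -(u : ℂ) ^ 2 * ((u : ℂ) - 4) ^ 3 * (3 * (u : ℂ) + 4) ∧
    ∀ t : ℚ, t ^ 5 ≠ -1 → u = (4 * t ^ 5 - 1) / (t ^ 5 + 1) →
      -u ^ 2 * (u - 4) ^ 3 * (3 * u + 4) =
        5 ^ 3 * (4 * t ^ 5 - 1) ^ 2 * (16 * t ^ 5 + 1) / (t ^ 5 + 1) ^ 6 := by
  constructor
  · rw [Fin.prod_univ_four] at hroots
    have hexp : (X - C (r 0)) * (X - C (r 1)) * (X - C (r 2)) * (X - C (r 3)) =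
        X^4 - C (r 0 + r 1 + r 2 + r 3) * X^3
        + C (r 0*r 1 + r 0*r 2 + r 0*r 3 + r 1*r 2 + r 1*r 3 + r 2*r 3) * X^2
        - C (r 0*r 1*r 2 + r 0*r 1*r 3 + r 0*r 2*r 3 + r 1*r 2*r 3) * X
        + C (r 0*r 1*r 2*r 3) := by
      simp only [map_add, map_mul]
      ring
    rw [hexp] at hroots
    have ha := congrArg (fun p => coeff p 3) hroots
    have hb := congrArg (fun p => coeff p 2) hroots
    have hc := congrArg (fun p => coeff p 1) hroots
    have hd := congrArg (fun p => coeff p 0) hroots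
    simp only [coeff_add, coeff_sub, coeff_C_mul, coeff_X_pow, coeff_C, coeff_one,
      coeff_X] at ha hb hc hd
    norm_num at ha hb hc hd
    rw [show (Finset.univ.filter (fun p : Fin 4 × Fin 4 => p.1 < p.2)) =
      ({(0,1),(0,2),(0,3),(1,2),(1,3),(2,3)} : Finset (Fin 4 × Fin 4)) from by decide]
    rw [show ∏ p ∈ ({(0,1),(0,2),(0,3),(1,2),(1,3),(2,3)} : Finset (Fin 4 × Fin 4)),
        (r p.1 - r p.2) ^ 2 = (r 0 - r 1)^2 * ((r 0 - r 2)^2 * ((r 0 - r 3)^2 *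
        ((r 1 - r 2)^2 * ((r 1 - r 3)^2 * (r 2 - r 3)^2)))) from by
      simp [Finset.prod_insert, Finset.mem_insert]]
    linear_combination (((27)*(r 0*r 1*r 2*r 3)^2*(u:ℂ)^3 + (-192)*(r 0*r 1*r 2 + r 0*r 1*r 3 + r 0*r 2*r 3 + r 1*r 2*r 3)*(r 0*r 1*r 2*r 3)^2 + (6)*(r 0*r 1*r 2 + r 0*r 1*r 3 + r 0*r 2*r 3 + r 1*r 2*r 3)^2*(r 0*r 1*r 2*r 3)*(u:ℂ) + (-4)*(r 0*r 1*r 2 + r 0*r 1*r 3 + r 0*r 2*r 3 + r 1*r 2*r 3)^3*(u:ℂ)^2 + (-144)*(r 0*r 1 + r 0*r 2 + r 0*r 3 + r 1*r 2 + r 1*r 3 + r 2*r 3)*(r 0*r 1*r 2*r 3)^2*(u:ℂ) + (18)*(r 0*r 1 + r 0*r 2 + r 0*r 3 + r 1*r 2 + r 1*r 3 + r 2*r 3)*(r 0*r 1*r 2 + r 0*r 1*r 3 + r 0*r 2*r 3 + r 1*r 2*r 3)*(r 0*r 1*r 2*r 3)*(u:ℂ)^2 + (18)*(r 0*r 1 +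 r 0*r 2 + r 0*r 3 + r 1*r 2 + r 1*r 3 + r 2*r 3)*(r 0*r 1*r 2 + r 0*r 1*r 3 + r 0*r 2*r 3 + r 1*r 2*r 3)^3 + (-80)*(r 0*r 1 + r 0*r 2 + r 0*r 3 + r 1*r 2 + r 1*r 3 + r 2*r 3)^2*(r 0*r 1*r 2 + r 0*r 1*r 3 + r 0*r 2*r 3 + r 1*r 2*r 3)*(r 0*r 1*r 2*r 3) + (-1)*(r 0*r 1 + r 0*r 2 + r 0*r 3 + r 1*r 2 + r 1*r 3 + r 2*r 3)^2*(r 0*r 1*r 2 + r 0*r 1*r 3 + r 0*r 2*r 3 + r 1*r 2*r 3)^2*(u:ℂ) + (4)*(r 0*r 1 + r 0*r 2 + r 0*r 3 + r 1*r 2 + r 1*r 3 + r 2*r 3)^3*(r 0*r 1*r 2*r 3)*(u:ℂ) + (-27)*(r 0 + r 1 + r 2 + r 3)*(r 0*r 1*r 2*r 3)^2*(u:ℂ)^2 + (-6)*(r 0 + r 1 + r 2 + r 3)*(r 0*r 1*r 2 + r 0*r 1*r 3 + r 0*r 2*r 3 + r 1*r 2*r 3)^2*(r 0*r 1*r 2*r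 3) + (4)*(r 0 + r 1 + r 2 + r 3)*(r 0*r 1*r 2 + r 0*r 1*r 3 + r 0*r 2*r 3 + r 1*r 2*r 3)^3*(u:ℂ) + (144)*(r 0 + r 1 + r 2 + r 3)*(r 0*r 1 + r 0*r 2 + r 0*r 3 + r 1*r 2 + r 1*r 3 + r 2*r 3)*(r 0*r 1*r 2*r 3)^2 + (-18)*(r 0 + r 1 + r 2 + r 3)*(r 0*r 1 + r 0*r 2 + r 0*r 3 + r 1*r 2 + r 1*r 3 + r 2*r 3)*(r 0*r 1*r 2 + r 0*r 1*r 3 + r 0*r 2*r 3 + r 1*r 2*r 3)*(r 0*r 1*r 2*r 3)*(u:ℂ) + (r 0 + r 1 + r 2 + r 3)*(r 0*r 1 + r 0*r 2 + r 0*r 3 + r 1*r 2 + r 1*r 3 + r 2*r 3)^2*(r 0*r 1*r 2 + r 0*r 1*r 3 + r 0*r 2*r 3 + r 1*r 2*r 3)^2 + (-4)*(r 0 + r 1 + r 2 + r 3)*(r 0*r 1 + r 0*r 2 + r 0*r 3 + r 1*r 2 + r 1*r 3 + r 2*r 3)^3*(r 0*r 1*r 2*r 3) + (27)*(r 0 +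 r 1 + r 2 + r 3)^2*(r 0*r 1*r 2*r 3)^2*(u:ℂ) + (-4)*(r 0 + r 1 + r 2 + r 3)^2*(r 0*r 1*r 2 + r 0*r 1*r 3 + r 0*r 2*r 3 + r 1*r 2*r 3)^3 + (18)*(r 0 + r 1 + r 2 + r 3)^2*(r 0*r 1 + r 0*r 2 + r 0*r 3 + r 1*r 2 + r 1*r 3 + r 2*r 3)*(r 0*r 1*r 2 + r 0*r 1*r 3 + r 0*r 2*r 3 + r 1*r 2*r 3)*(r 0*r 1*r 2*r 3) + (-27)*(r 0 + r 1 + r 2 + r 3)^3*(r 0*r 1*r 2*r 3)^2)) * ha - (((128)*(r 0*r 1*r 2*r 3) + (192)*(r 0*r 1*r 2*r 3)*(u:ℂ) + (80)*(r 0*r 1*r 2*r 3)*(u:ℂ)^2 + (-4)*(r 0*r 1*r 2*r 3)*(u:ℂ)^4 + (-256)*(r 0*r 1*r 2*r 3)^2 + (-128)*(r 0*r 1*r 2*r 3)^2*(u:ℂ) + (144)*(r 0*r 1*r 2*r 3)^2*(u:ℂ)^2 + (160)*(r 0*r 1*r 2 + r 0*r 1*r 3 + r 0*r 2*r 3 +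 r 1*r 2*r 3)*(r 0*r 1*r 2*r 3)*(u:ℂ) + (80)*(r 0*r 1*r 2 + r 0*r 1*r 3 + r 0*r 2*r 3 + r 1*r 2*r 3)*(r 0*r 1*r 2*r 3)*(u:ℂ)^2 + (-18)*(r 0*r 1*r 2 + r 0*r 1*r 3 + r 0*r 2*r 3 + r 1*r 2*r 3)*(r 0*r 1*r 2*r 3)*(u:ℂ)^3 + (-16)*(r 0*r 1*r 2 + r 0*r 1*r 3 + r 0*r 2*r 3 + r 1*r 2*r 3)^2 + (-16)*(r 0*r 1*r 2 + r 0*r 1*r 3 + r 0*r 2*r 3 + r 1*r 2*r 3)^2*(u:ℂ) + (-2)*(r 0*r 1*r 2 + r 0*r 1*r 3 + r 0*r 2*r 3 + r 1*r 2*r 3)^2*(u:ℂ)^2 + (r 0*r 1*r 2 + r 0*r 1*r 3 + r 0*r 2*r 3 + r 1*r 2*r 3)^2*(u:ℂ)^3 + (144)*(r 0*r 1*r 2 + r 0*r 1*r 3 + r 0*r 2*r 3 + r 1*r 2*r 3)^2*(r 0*r 1*r 2*r 3) + (-18)*(r 0*r 1*r 2 + r 0*r 1*r 3 + r 0*r 2*r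 3 + r 1*r 2*r 3)^3*(u:ℂ) + (64)*(r 0*r 1 + r 0*r 2 + r 0*r 3 + r 1*r 2 + r 1*r 3 + r 2*r 3)*(r 0*r 1*r 2*r 3) + (64)*(r 0*r 1 + r 0*r 2 + r 0*r 3 + r 1*r 2 + r 1*r 3 + r 2*r 3)*(r 0*r 1*r 2*r 3)*(u:ℂ) + (8)*(r 0*r 1 + r 0*r 2 + r 0*r 3 + r 1*r 2 + r 1*r 3 + r 2*r 3)*(r 0*r 1*r 2*r 3)*(u:ℂ)^2 + (-4)*(r 0*r 1 + r 0*r 2 + r 0*r 3 + r 1*r 2 + r 1*r 3 + r 2*r 3)*(r 0*r 1*r 2*r 3)*(u:ℂ)^3 + (-128)*(r 0*r 1 + r 0*r 2 + r 0*r 3 + r 1*r 2 + r 1*r 3 + r 2*r 3)*(r 0*r 1*r 2*r 3)^2 + (80)*(r 0*r 1 + r 0*r 2 + r 0*r 3 + r 1*r 2 + r 1*r 3 + r 2*r 3)*(r 0*r 1*r 2 + r 0*r 1*r 3 + r 0*r 2*r 3 + r 1*r 2*r 3)*(r 0*r 1*r 2*r 3)*(u:ℂ) + (-8)*(r 0*r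 1 + r 0*r 2 + r 0*r 3 + r 1*r 2 + r 1*r 3 + r 2*r 3)*(r 0*r 1*r 2 + r 0*r 1*r 3 + r 0*r 2*r 3 + r 1*r 2*r 3)^2 + (-4)*(r 0*r 1 + r 0*r 2 + r 0*r 3 + r 1*r 2 + r 1*r 3 + r 2*r 3)*(r 0*r 1*r 2 + r 0*r 1*r 3 + r 0*r 2*r 3 + r 1*r 2*r 3)^2*(u:ℂ) + (r 0*r 1 + r 0*r 2 + r 0*r 3 + r 1*r 2 + r 1*r 3 + r 2*r 3)*(r 0*r 1*r 2 + r 0*r 1*r 3 + r 0*r 2*r 3 + r 1*r 2*r 3)^2*(u:ℂ)^2 + (32)*(r 0*r 1 + r 0*r 2 + r 0*r 3 + r 1*r 2 + r 1*r 3 + r 2*r 3)^2*(r 0*r 1*r 2*r 3) + (16)*(r 0*r 1 + r 0*r 2 + r 0*r 3 + r 1*r 2 + r 1*r 3 + r 2*r 3)^2*(r 0*r 1*r 2*r 3)*(u:ℂ) + (-4)*(r 0*r 1 + r 0*r 2 + r 0*r 3 + r 1*r 2 + r 1*r 3 + r 2*r 3)^2*(r 0*r 1*r 2*r 3)*(u:ℂ)^2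 + (-4)*(r 0*r 1 + r 0*r 2 + r 0*r 3 + r 1*r 2 + r 1*r 3 + r 2*r 3)^2*(r 0*r 1*r 2 + r 0*r 1*r 3 + r 0*r 2*r 3 + r 1*r 2*r 3)^2 + (16)*(r 0*r 1 + r 0*r 2 + r 0*r 3 + r 1*r 2 + r 1*r 3 + r 2*r 3)^3*(r 0*r 1*r 2*r 3))) * hb + (((32)*(u:ℂ) + (48)*(u:ℂ)^2 + (11)*(u:ℂ)^3 + (-18)*(u:ℂ)^4 + (3)*(u:ℂ)^5 + (32)*(r 0*r 1*r 2*r 3)*(u:ℂ) + (176)*(r 0*r 1*r 2*r 3)*(u:ℂ)^2 + (50)*(r 0*r 1*r 2*r 3)*(u:ℂ)^3 + (-18)*(r 0*r 1*r 2*r 3)*(u:ℂ)^4 + (192)*(r 0*r 1*r 2*r 3)^2*(u:ℂ) + (-32)*(r 0*r 1*r 2 + r 0*r 1*r 3 + r 0*r 2*r 3 + r 1*r 2*r 3) + (-48)*(r 0*r 1*r 2 + r 0*r 1*r 3 + r 0*r 2*r 3 + r 1*r 2*r 3)*(u:ℂ) + (-11)*(r 0*r 1*r 2 + r 0*r 1*r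 3 + r 0*r 2*r 3 + r 1*r 2*r 3)*(u:ℂ)^2 + (18)*(r 0*r 1*r 2 + r 0*r 1*r 3 + r 0*r 2*r 3 + r 1*r 2*r 3)*(u:ℂ)^3 + (-3)*(r 0*r 1*r 2 + r 0*r 1*r 3 + r 0*r 2*r 3 + r 1*r 2*r 3)*(u:ℂ)^4 + (288)*(r 0*r 1*r 2 + r 0*r 1*r 3 + r 0*r 2*r 3 + r 1*r 2*r 3)*(r 0*r 1*r 2*r 3) + (144)*(r 0*r 1*r 2 + r 0*r 1*r 3 + r 0*r 2*r 3 + r 1*r 2*r 3)*(r 0*r 1*r 2*r 3)*(u:ℂ) + (-6)*(r 0*r 1*r 2 + r 0*r 1*r 3 + r 0*r 2*r 3 + r 1*r 2*r 3)*(r 0*r 1*r 2*r 3)*(u:ℂ)^2 + (-9)*(r 0*r 1*r 2 + r 0*r 1*r 3 + r 0*r 2*r 3 + r 1*r 2*r 3)^2*(u:ℂ) + (-18)*(r 0*r 1*r 2 + r 0*r 1*r 3 + r 0*r 2*r 3 + r 1*r 2*r 3)^2*(u:ℂ)^2 + (4)*(r 0*r 1*r 2 + r 0*r 1*r 3 +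 r 0*r 2*r 3 + r 1*r 2*r 3)^2*(u:ℂ)^3 + (-27)*(r 0*r 1*r 2 + r 0*r 1*r 3 + r 0*r 2*r 3 + r 1*r 2*r 3)^3)) * hc - (((288)*(u:ℂ)^2 + (48)*(u:ℂ)^3 + (-85)*(u:ℂ)^4 + (14)*(u:ℂ)^5 + (-256)*(r 0*r 1*r 2*r 3) + (-512)*(r 0*r 1*r 2*r 3)*(u:ℂ) + (-32)*(r 0*r 1*r 2*r 3)*(u:ℂ)^2 + (144)*(r 0*r 1*r 2*r 3)*(u:ℂ)^3 + (-27)*(r 0*r 1*r 2*r 3)*(u:ℂ)^4 + (256)*(r 0*r 1*r 2*r 3)^2)) * hd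
  · intro t ht hu
    have h1 : (t:ℚ) ^ 5 + 1 ≠ 0 := by
      intro h; apply ht; linarith
    subst hu
    field_simp
    ring
end

section
/- Let u ∈ ℚ and suppose the polynomial f = X⁴ + uX³ + (u+2)X² + uX + 1 is irreducible over ℚ. Let y ∈ ℚ̄ be a root of f, and suppose the extension ℚ(y)/ℚ is Galois (of degree 4). Let ε ∈ ℚ̄ satisfy ε² = u² − 4u. Then −(u − 4)(3u + 4) is a square in the field ℚ(ε); equivalently, the discriminant −u²(u−4)³(3u+4) of f is a square in ℚ(ε). -/
open Polynomial IntermediateField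

lemma fix_of_gen {L : Type*} [Field L] [Algebra ℚ L] [FiniteDimensional ℚ L]
    (g : L ≃ₐ[ℚ] L) (a : L) (ha : IntermediateField.adjoin ℚ {a} = ⊤)
    (h : g a = a) (x : L) : g x = x := by
  have hint : IsIntegral ℚ a := IsIntegral.of_finite ℚ a
  have h1 : Algebra.adjoin ℚ {a} = ⊤ := by
    have := IntermediateField.adjoin_simple_toSubalgebra_of_isAlgebraic hint.isAlgebraic
    rw [ha] at this
    rw [← this, IntermediateField.top_toSubalgebra]
  have h2 : Algebra.adjoin ℚ ({a} : Set L) ≤ AlgHom.equalizer g.toAlgHom (AlgHom.id ℚ L) :=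
    Algebra.adjoin_le (by simpa using h)
  rw [h1] at h2
  exact h2 (Algebra.mem_top)

set_option maxHeartbeats 1000000 in
/-- If `f = X⁴ + uX³ + (u+2)X² + uX + 1` is irreducible over `ℚ`, `y` is a root of `f`
with `ℚ(y)/ℚ` Galois, and `ε² = u² - 4u`, then `-(u-4)(3u+4)` is a square in `ℚ(ε)`;
equivalently the discriminant `-u²(u-4)³(3u+4)` of `f` is a square in `ℚ(ε)`. -/
theorem stmt_12 (u : ℚ)
    (hirr : Irreducible
      (X ^ 4 + C u * X ^ 3 + C (u + 2) * X ^ 2 + C u * X + 1 : ℚ[X]))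
    (y : AlgebraicClosure ℚ)
    (hy : aeval y (X ^ 4 + C u * X ^ 3 + C (u + 2) * X ^ 2 + C u * X + 1 : ℚ[X]) = 0)
    (hgal : IsGalois ℚ ↥(IntermediateField.adjoin ℚ ({y} : Set (AlgebraicClosure ℚ))))
    (ε : AlgebraicClosure ℚ)
    (hε : ε ^ 2 = algebraMap ℚ (AlgebraicClosure ℚ) (u ^ 2 - 4 * u)) :
    (∃ s : ↥(IntermediateField.adjoin ℚ ({ε} : Set (AlgebraicClosure ℚ))),
      (s : AlgebraicClosure ℚ) ^ 2 =
        algebraMap ℚ (AlgebraicClosure ℚ) (-(u - 4) * (3 * u + 4))) ∧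
    (∃ s : ↥(IntermediateField.adjoin ℚ ({ε} : Set (AlgebraicClosure ℚ))),
      (s : AlgebraicClosure ℚ) ^ 2 =
        algebraMap ℚ (AlgebraicClosure ℚ) (-u ^ 2 * (u - 4) ^ 3 * (3 * u + 4))) := by
  classical
  set f : ℚ[X] := X ^ 4 + C u * X ^ 3 + C (u + 2) * X ^ 2 + C u * X + 1 with hf
  -- basic polynomial facts
  have hfdeg : f.natDegree = 4 := by unfold f; compute_degree!
  have hfmonic : f.Monic := by
    apply monic_of_natDegree_le_of_coeff_eq_one 4 (le_of_eq hfdeg)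
    unfold f
    simp only [coeff_add, coeff_one, coeff_C_mul, coeff_X_pow, coeff_mul_X_pow', coeff_X]
    norm_num
  have hfne : f ≠ 0 := hfmonic.ne_zero
  have hmin : minpoly ℚ y = f := (minpoly.eq_of_irreducible_of_monic hirr hy hfmonic).symm
  -- expanded root equation over K (with rat casts)
  have hyk : y ^ 4 + (u : AlgebraicClosure ℚ) * y ^ 3 + ((u : AlgebraicClosure ℚ) + 2) * y ^ 2
      + (u : AlgebraicClosure ℚ) * y + 1 = 0 := by
    simpa [f, map_add, map_mul, map_pow] using hy
  have hy0 : y ≠ 0 := by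
    intro h; rw [h] at hyk; simp at hyk
  have hεk : ε ^ 2 = (u : AlgebraicClosure ℚ) ^ 2 - 4 * (u : AlgebraicClosure ℚ) := by
    rw [hε, eq_ratCast]; push_cast; ring
  -- z and its quadratic
  set z : AlgebraicClosure ℚ := y + y⁻¹ with hzdef
  have hz : z ^ 2 + (u : AlgebraicClosure ℚ) * z + (u : AlgebraicClosure ℚ) = 0 := by
    unfold z
    field_simp
    linear_combination hyk
  have he : ε = 2 * z + u ∨ ε = -(2 * z + u) := by
    have h0 : (ε - (2 * z + u)) * (ε + (2 * z + u)) = 0 := by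
      linear_combination hεk - 4 * hz
    rcases mul_eq_zero.mp h0 with h | h
    · left; exact sub_eq_zero.mp h
    · right; exact eq_neg_of_add_eq_zero_left h
  -- the field L = Q(y)
  set L : IntermediateField ℚ (AlgebraicClosure ℚ) := IntermediateField.adjoin ℚ {y} with hL
  have hyint : IsIntegral ℚ y := ⟨f, hfmonic, by rw [← aeval_def]; exact hy⟩
  haveI hFD : FiniteDimensional ℚ L := IntermediateField.adjoin.finiteDimensional hyint
  have hyL : y ∈ L := IntermediateField.mem_adjoin_simple_self ℚ y
  have hzL : z ∈ L := add_mem hyL (inv_mem hyL)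
  have h2zu : 2 * z + (u : AlgebraicClosure ℚ) ∈ L := by
    have : 2 * z + (u : AlgebraicClosure ℚ) = z + z + (u : AlgebraicClosure ℚ) := by ring
    rw [this]
    exact add_mem (add_mem hzL hzL) (SubfieldClass.ratCast_mem L u)
  have hεL : ε ∈ L := by
    rcases he with h | h <;> rw [h]
    · exact h2zu
    · exact neg_mem h2zu
  -- the other root y' of the companion quadratic
  set z' : AlgebraicClosure ℚ := -(u : AlgebraicClosure ℚ) - z with hz'def
  have hz'L : z' ∈ L := sub_mem (neg_mem (SubfieldClass.ratCast_mem L u)) hzL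
  obtain ⟨y', hy'k0⟩ : ∃ w : AlgebraicClosure ℚ, (X ^ 2 - Polynomial.C z' * X + 1 :
      (AlgebraicClosure ℚ)[X]).IsRoot w := by
    apply IsAlgClosed.exists_root
    intro hdeg
    have : (X ^ 2 - Polynomial.C z' * X + 1 : (AlgebraicClosure ℚ)[X]).degree = 2 := by
      compute_degree!
    rw [this] at hdeg
    norm_num at hdeg
  have hy'k : y' ^ 2 - z' * y' + 1 = 0 := by
    simpa using hy'k0
  have hy'0 : y' ≠ 0 := by
    intro h; rw [h] at hy'k; simp at hy'k
  have hy'root : aeval y' f = 0 := by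
    rw [hf]
    simp only [map_add, map_mul, map_pow, map_one, aeval_X, aeval_C, eq_ratCast]
    push_cast
    linear_combination (y' ^ 2 - z * y' + 1) * hy'k + y' ^ 2 * hz
  have hminy' : minpoly ℚ y' = f := (minpoly.eq_of_irreducible_of_monic hirr hy'root hfmonic).symm
  -- y' lies in L by normality
  have hy'L : y' ∈ L := by
    have hYgen : minpoly ℚ (IntermediateField.AdjoinSimple.gen ℚ y) = f := by
      exact (IntermediateField.minpoly_gen (F := ℚ) (α := y)).trans hmin
    have hsplits : ((minpoly ℚ (IntermediateField.AdjoinSimple.gen ℚ y)).map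
        (algebraMap ℚ L)).Splits := hgal.to_normal.splits _
    rw [hYgen] at hsplits
    have hsp : (f.map (algebraMap ℚ L)).Splits :=
      hsplits
    have hroots := Polynomial.Splits.roots_map hsp (algebraMap L (AlgebraicClosure ℚ) : L →+* _)
    rw [Polynomial.map_map] at hroots
    have hcomp : (algebraMap L (AlgebraicClosure ℚ) : L →+* _).comp (algebraMap ℚ L)
        = algebraMap ℚ (AlgebraicClosure ℚ) := by
      ext q; simp [IsScalarTower.algebraMap_apply ℚ L (AlgebraicClosure ℚ)]
    rw [hcomp] at hroots
    have hy'mem : y' ∈ (f.map (algebraMap ℚ (AlgebraicClosure ℚ))).roots := by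
      rw [Polynomial.mem_roots (Polynomial.map_monic_ne_zero hfmonic)]
      rw [Polynomial.IsRoot, Polynomial.eval_map, ← Polynomial.aeval_def]
      exact hy'root
    rw [hroots] at hy'mem
    obtain ⟨r, _, hr⟩ := Multiset.mem_map.mp hy'mem
    rw [← hr]
    exact r.2
  -- elements of L
  set Y : L := ⟨y, hyL⟩ with hYdef
  set Y' : L := ⟨y', hy'L⟩ with hY'def
  set ZL : L := ⟨z, hzL⟩ with hZLdef
  set Z'L : L := ⟨z', hz'L⟩ with hZ'Ldef
  set εL : L := ⟨ε, hεL⟩ with hεLdef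
  set uL : L := algebraMap ℚ L u with huLdef
  have huLcoe : ((uL : L) : AlgebraicClosure ℚ) = (u : AlgebraicClosure ℚ) := by
    rw [huLdef, show (algebraMap ℚ L) u = ((u : ℚ) : L) from eq_ratCast _ u]
    rfl
  have hY0 : Y ≠ 0 := by
    intro h
    apply hy0
    exact congrArg Subtype.val h
  have hY'0 : Y' ≠ 0 := by
    intro h
    apply hy'0
    exact congrArg Subtype.val h
  have hYicoe : ((Y⁻¹ : L) : AlgebraicClosure ℚ) = y⁻¹ := by push_cast; rfl
  have hY'icoe : ((Y'⁻¹ : L) : AlgebraicClosure ℚ) = y'⁻¹ := by push_cast; rfl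
  have hyne : y ≠ y⁻¹ := by
    intro h
    have h2 : aeval y ((X : ℚ[X]) ^ 2 - 1) = 0 := by
      simp only [map_sub, map_pow, aeval_X, map_one]
      have : y * y = 1 := by nth_rewrite 2 [h]; exact mul_inv_cancel₀ hy0
      linear_combination this
    have hdvd := minpoly.dvd ℚ y h2
    rw [hmin] at hdvd
    have hne : ((X : ℚ[X]) ^ 2 - 1) ≠ 0 := by
      intro hc
      have : ((X : ℚ[X]) ^ 2 - 1).natDegree = 2 := by compute_degree!
      rw [hc] at this
      simp at this
    have := Polynomial.natDegree_le_of_dvd hdvd hne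
    have h2deg : ((X : ℚ[X]) ^ 2 - 1).natDegree = 2 := by compute_degree!
    rw [hfdeg, h2deg] at this
    norm_num at this
  have hYne : Y ≠ Y⁻¹ := by
    intro h
    apply hyne
    have := congrArg Subtype.val h
    rwa [hYicoe] at this
  -- generators
  have hfinrank : Module.finrank ℚ L = 4 := by
    rw [hL, IntermediateField.adjoin.finrank hyint, hmin, hfdeg]
  have hminY : minpoly ℚ Y = f := by
    have h1 : minpoly ℚ ((algebraMap L (AlgebraicClosure ℚ)) Y) = minpoly ℚ Y :=
      minpoly.algebraMap_eq (algebraMap L (AlgebraicClosure ℚ)).injective Y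
    rw [show (algebraMap L (AlgebraicClosure ℚ)) Y = y from rfl] at h1
    rw [← h1, hmin]
  have hminY' : minpoly ℚ Y' = f := by
    have h1 : minpoly ℚ ((algebraMap L (AlgebraicClosure ℚ)) Y') = minpoly ℚ Y' :=
      minpoly.algebraMap_eq (algebraMap L (AlgebraicClosure ℚ)).injective Y'
    rw [show (algebraMap L (AlgebraicClosure ℚ)) Y' = y' from rfl] at h1
    rw [← h1, hminy']
  have htopY : IntermediateField.adjoin ℚ {Y} = ⊤ := by
    rw [Field.primitive_element_iff_minpoly_natDegree_eq, hminY, hfdeg, hfinrank]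
  have htopY' : IntermediateField.adjoin ℚ {Y'} = ⊤ := by
    rw [Field.primitive_element_iff_minpoly_natDegree_eq, hminY', hfdeg, hfinrank]
  -- quadratics in L
  have hZLval : ZL = Y + Y⁻¹ := by
    apply Subtype.ext
    push_cast
    rfl
  have hZ'Lval : Z'L = -uL - ZL := by
    apply Subtype.ext
    push_cast
    rw [huLcoe]
  have hYq : Y ^ 2 - ZL * Y + 1 = 0 := by
    apply Subtype.ext
    push_cast
    show y ^ 2 - z * y + 1 = 0
    rw [hzdef]
    field_simp
    ring
  have hY'q : Y' ^ 2 - Z'L * Y' + 1 = 0 := by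
    apply Subtype.ext
    push_cast
    show y' ^ 2 - z' * y' + 1 = 0
    exact hy'k
  -- F' and Δ
  set F' : IntermediateField ℚ L := IntermediateField.adjoin ℚ {εL} with hF'def
  set Δ : L := (Y - Y⁻¹) * (Y' - Y'⁻¹) with hΔdef
  haveI := hgal
  have hgfix : ∀ g : L ≃ₐ[ℚ] L, g ∈ IntermediateField.fixingSubgroup F' → g Δ = Δ := by
    intro g hg
    have hgε : g εL = εL :=
      (IntermediateField.mem_fixingSubgroup_iff F' g).mp hg εL
        (IntermediateField.mem_adjoin_simple_self ℚ εL)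
    have hgZ : g ZL = ZL := by
      rcases he with h | h
      · have hrep : εL = 2 * ZL + uL := by
          apply Subtype.ext
          push_cast
          rw [huLcoe]
          exact h
        rw [hrep] at hgε
        rw [map_add, map_mul, map_ofNat, huLdef, AlgEquiv.commutes] at hgε
        have h2 : (2 : L) * g ZL = 2 * ZL := by
          rw [← huLdef] at hgε
          linear_combination hgε
        exact mul_left_cancel₀ two_ne_zero h2
      · have hrep : εL = -(2 * ZL + uL) := by
          apply Subtype.ext
          push_cast
          rw [huLcoe]
          exact h
        rw [hrep] at hgε
        rw [map_neg, map_add, map_mul, map_ofNat, huLdef, AlgEquiv.commutes] at hgε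
        have h2 : (2 : L) * g ZL = 2 * ZL := by
          rw [← huLdef] at hgε
          have := neg_injective hgε
          linear_combination this
        exact mul_left_cancel₀ two_ne_zero h2
    have hgZ' : g Z'L = Z'L := by
      rw [hZ'Lval]
      rw [map_sub, map_neg, huLdef, AlgEquiv.commutes, ← huLdef, hgZ]
    -- g Y is y or y⁻¹
    have hgq : (g Y) ^ 2 - ZL * (g Y) + 1 = 0 := by
      have := congrArg g hYq
      simp only [map_add, map_sub, map_mul, map_pow, map_one, map_zero, hgZ] at this
      exact this
    have hYY : Y * Y⁻¹ = 1 := mul_inv_cancel₀ hY0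
    have hfac : (g Y - Y) * (g Y - Y⁻¹) = 0 := by
      rw [hZLval] at hgq
      linear_combination hgq + hYY
    have hgY : g Y = Y ∨ g Y = Y⁻¹ := by
      rcases mul_eq_zero.mp hfac with h | h
      · exact Or.inl (sub_eq_zero.mp h)
      · exact Or.inr (sub_eq_zero.mp h)
    have hgq' : (g Y') ^ 2 - Z'L * (g Y') + 1 = 0 := by
      have := congrArg g hY'q
      simp only [map_add, map_sub, map_mul, map_pow, map_one, map_zero, hgZ'] at this
      exact this
    have hY'Y' : Y' * Y'⁻¹ = 1 := mul_inv_cancel₀ hY'0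
    have hZ'val2 : Z'L = Y' + Y'⁻¹ := by
      have h1 : Y' ^ 2 - (Y' + Y'⁻¹) * Y' + 1 = 0 := by
        linear_combination -hY'Y'
      have h3 : (Z'L - (Y' + Y'⁻¹)) * Y' = 0 := by linear_combination h1 - hY'q
      rcases mul_eq_zero.mp h3 with h4 | h4
      · exact sub_eq_zero.mp h4
      · exact absurd h4 hY'0
    have hfac' : (g Y' - Y') * (g Y' - Y'⁻¹) = 0 := by
      rw [hZ'val2] at hgq'
      linear_combination hgq' + hY'Y'
    have hgY' : g Y' = Y' ∨ g Y' = Y'⁻¹ := by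
      rcases mul_eq_zero.mp hfac' with h | h
      · exact Or.inl (sub_eq_zero.mp h)
      · exact Or.inr (sub_eq_zero.mp h)
    rcases hgY with h | h
    · exact fix_of_gen g Y htopY h Δ
    · rcases hgY' with h' | h'
      · exfalso
        have hid := fix_of_gen g Y' htopY' h'
        have := hid Y
        rw [h] at this
        exact hYne this.symm
      · rw [hΔdef]
        simp only [map_mul, map_sub, map_inv₀, h, h', inv_inv]
        ring
  have hΔmem : Δ ∈ F' := by
    rw [← IsGalois.fixedField_fixingSubgroup F']
    exact fun g => hgfix g.1 g.2
  -- back to K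
  have hδmem : ((Δ : L) : AlgebraicClosure ℚ) ∈ IntermediateField.adjoin ℚ {ε} := by
    have h1 : IntermediateField.lift (IntermediateField.adjoin ℚ {εL})
        = IntermediateField.adjoin ℚ {ε} := IntermediateField.lift_adjoin_simple ℚ L εL
    rw [← h1]
    exact (IntermediateField.mem_lift Δ).mpr hΔmem
  have hΔcoe : ((Δ : L) : AlgebraicClosure ℚ) = (y - y⁻¹) * (y' - y'⁻¹) := by
    rw [hΔdef]
    push_cast
    rfl
  rw [hΔcoe] at hδmem
  -- the square computations
  have h1sq : (y - y⁻¹) ^ 2 = z ^ 2 - 4 := by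
    rw [hzdef]
    field_simp
    ring
  have h2sq : (y' - y'⁻¹) ^ 2 = z' ^ 2 - 4 := by
    field_simp
    linear_combination (y' ^ 2 + z' * y' + 1) * hy'k
  have hsq1 : ((y - y⁻¹) * (y' - y'⁻¹)) ^ 2
      = algebraMap ℚ (AlgebraicClosure ℚ) (-(u - 4) * (3 * u + 4)) := by
    rw [mul_pow, h1sq, h2sq, eq_ratCast, hz'def]
    push_cast
    linear_combination (z ^ 2 + (u : AlgebraicClosure ℚ) * z - (u : AlgebraicClosure ℚ) - 8) * hz
  constructor
  · exact ⟨⟨(y - y⁻¹) * (y' - y'⁻¹), hδmem⟩, hsq1⟩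
  · refine ⟨⟨algebraMap ℚ (AlgebraicClosure ℚ) (u * (u - 4)),
        IntermediateField.algebraMap_mem _ _⟩
      * ⟨(y - y⁻¹) * (y' - y'⁻¹), hδmem⟩, ?_⟩
    rw [MulMemClass.coe_mul]
    rw [mul_pow, hsq1, ← map_pow, ← map_mul]
    congr 1
    ring
end

section
/- Let X, Z ∈ ℚ satisfy 5Z² = 16X⁵ + 1, and write X = a/b with a, b coprime integers and b > 0. Then there exists a natural number c such that b = 5c². -/
lemma int_of_rat_sq (n : ℤ) (r : ℚ) (h : (n:ℚ) = r^2) : ∃ m : ℤ, n = m^2 := by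
  have hden : r.den ^ 2 = 1 := by
    have : (r^2).den = 1 := by rw [← h]; exact Rat.den_intCast n
    rwa [Rat.den_pow] at this
  have hden1 : r.den = 1 := (pow_eq_one_iff.mp hden).resolve_right two_ne_zero
  refine ⟨r.num, ?_⟩
  have h1 : (r.num : ℚ) = r := (Rat.den_eq_one_iff r).mp hden1
  have : (n:ℚ) = (r.num:ℚ)^2 := by rw [h, h1]
  exact_mod_cast this

lemma zmod25 : ∀ a b m : ZMod 25, 5*m^2 = b*(16*a^5+b^5) → b^2 = 0 := by decide

/-- If `X, Z ∈ ℚ` satisfy `5Z² = 16X⁵ + 1` and `X = a/b` with `a, b` coprime integers,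
`b > 0`, then `b = 5c²` for some natural number `c`. -/
theorem stmt_14 (X Z : ℚ) (h : 5 * Z ^ 2 = 16 * X ^ 5 + 1)
    (a b : ℤ) (hcop : IsCoprime a b) (hb : 0 < b) (hX : X = (a : ℚ) / (b : ℚ)) :
    ∃ c : ℕ, b = 5 * (c : ℤ) ^ 2 := by
  have hb0 : (b:ℚ) ≠ 0 := by exact_mod_cast hb.ne'
  set N : ℤ := 16 * a^5 + b^5 with hN
  have key : ((5 * b * N : ℤ) : ℚ) = (5 * Z * (b:ℚ)^3)^2 := by
    field_simp [hX] at h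
    push_cast [hN]
    have hXb : X * (b:ℚ) = a := by rw [hX, div_mul_cancel₀ _ hb0]
    linear_combination (-5*(b:ℚ)^6) * h - 80*(b:ℚ)*((X*b)^4 + (X*b)^3*a + (X*b)^2*a^2 + (X*b)*a^3 + (a:ℚ)^4) * hXb
  obtain ⟨m, hm⟩ := int_of_rat_sq _ _ key
  have h5m : (5:ℤ) ∣ m := by
    have : (5:ℤ) ∣ m^2 := ⟨b*N, by linarith⟩
    exact Int.Prime.dvd_pow' (by norm_num) this
  obtain ⟨m₁, rfl⟩ := h5m
  have hm₁sq : 5 * m₁^2 = b * N := by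
    have h25 : 25*(5*m₁^2) = 25*(b*N) := by linear_combination (-5:ℤ)*hm
    exact mul_left_cancel₀ (by norm_num : (25:ℤ) ≠ 0) h25
  -- 5 ∣ b via mod 25
  have h5b : (5:ℤ) ∣ b := by
    have hz : ((b : ZMod 25))^2 = 0 := by
      apply zmod25 (a : ZMod 25) _ (m₁ : ZMod 25)
      have := congrArg (fun z : ℤ => (z : ZMod 25)) hm₁sq
      push_cast [hN] at this
      exact this
    have h25sq : (25:ℤ) ∣ b^2 := by
      have : ((b^2 : ℤ) : ZMod 25) = 0 := by push_cast; exact hz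
      exact_mod_cast (ZMod.intCast_zmod_eq_zero_iff_dvd _ 25).mp this
    have h5sq : (5:ℤ) ∣ b^2 := dvd_trans ⟨5, by norm_num⟩ h25sq
    exact Int.Prime.dvd_pow' (by norm_num) h5sq
  obtain ⟨b₁, rfl⟩ := h5b
  have hb₁pos : 0 < b₁ := by linarith
  have hm2 : m₁^2 = b₁ * N := by
    have h5 : 5*(m₁^2) = 5*(b₁*N) := by linear_combination hm₁sq
    exact mul_left_cancel₀ (by norm_num : (5:ℤ) ≠ 0) h5
  have hcopb₁a : IsCoprime b₁ a :=
    (hcop.symm.of_isCoprime_of_dvd_left ⟨5, by ring⟩)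
  have hsq : ∃ r : ℤ, b₁ = r^2 := by
    rcases Int.even_or_odd b₁ with he | ho
    · -- even case
      obtain ⟨e', rfl⟩ := he
      set N' : ℤ := a^5 + (e'+e') * (5^5 * e'^4) with hN'
      have hNN : N = 16 * N' := by rw [hN, hN']; ring
      have hm3 : (4:ℤ) ∣ m₁ := by
        have : (4:ℤ)^2 ∣ m₁^2 := ⟨(e'+e') * N', by rw [hm2, hNN]; ring⟩
        exact (Int.pow_dvd_pow_iff (by norm_num)).mp this
      obtain ⟨m₂, rfl⟩ := hm3
      have hm4 : (e'+e') * N' = m₂^2 := by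
        have h16 : 16*((e'+e') * N') = 16*(m₂^2) := by
          linear_combination -hm2 - (e'+e') * hNN
        exact mul_left_cancel₀ (by norm_num : (16:ℤ) ≠ 0) h16
      have hcopN : IsCoprime (e'+e') N' := by
        have h1 : IsCoprime (e'+e') (a^5) := hcopb₁a.pow_right
        have h2 := h1.add_mul_left_right (5^5 * e'^4)
        rwa [hN']
      exact (Int.sq_of_isCoprime hcopN hm4).imp fun r hr => by
        rcases hr with hr | hr
        · exact hr
        · nlinarith [sq_nonneg r]
    · -- odd case
      obtain ⟨k, hk⟩ := ho
      have hcopN : IsCoprime b₁ N := by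
        have h2 : IsCoprime b₁ (2:ℤ) := ⟨1, -k, by linarith⟩
        have h16 : IsCoprime b₁ (16:ℤ) := by
          have := h2.pow_right (n := 4); norm_num at this; exact this
        have h1 : IsCoprime b₁ (16 * a^5) := h16.mul_right hcopb₁a.pow_right
        have h3 := h1.add_mul_left_right (5^5 * b₁^4)
        rwa [show 16*a^5 + b₁*(5^5*b₁^4) = N by rw [hN]; ring] at h3
      exact (Int.sq_of_isCoprime hcopN hm2.symm).imp fun r hr => by
        rcases hr with hr | hr
        · exact hr
        · nlinarith [sq_nonneg r]
  obtain ⟨r, hr⟩ := hsq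
  refine ⟨r.natAbs, ?_⟩
  rw [hr, Int.natAbs_sq]
end

section
/- Let X, Z ∈ ℚ satisfy 5Z² = 16X⁵ + 1, and write X = a/b with a, b coprime integers and b > 0. Then the 5-adic valuation of b is odd; moreover, the 2-adic valuation of b is even, and for every prime p distinct from 2 and 5 the p-adic valuation of b is even. -/
lemma padicValInt_pow' (p : ℕ) [Fact p.Prime] {x : ℤ} (hx : x ≠ 0) (n : ℕ) :
    padicValInt p (x ^ n) = n * padicValInt p x := by
  simp [padicValInt, Int.natAbs_pow, padicValNat.pow]

lemma padicValInt_two_16 : padicValInt 2 (16 : ℤ) = 4 := by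
  haveI : Fact (Nat.Prime 2) := ⟨by norm_num⟩
  have : padicValInt 2 (16 : ℤ) = padicValNat 2 16 := by simp [padicValInt]
  rw [this, show (16 : ℕ) = 2 ^ 4 by norm_num, padicValNat.prime_pow]

lemma padicValInt_five_5 : padicValInt 5 (5 : ℤ) = 1 := by
  have : padicValInt 5 (5 : ℤ) = padicValNat 5 5 := by simp [padicValInt]
  rw [this, padicValNat.self (by norm_num)]

lemma aux_val (p : ℕ) [Fact p.Prime] {c b d S : ℤ} (hc : c ≠ 0) (hb : b ≠ 0)
    (hd : d ≠ 0) (hS : S ≠ 0) (E : 5 * c ^ 2 * b ^ 5 = d ^ 2 * S) :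
    padicValInt p 5 + (2 * padicValInt p c + 5 * padicValInt p b)
      = 2 * padicValInt p d + padicValInt p S := by
  have h1 := congrArg (padicValInt p) E
  rw [padicValInt.mul (by positivity) (pow_ne_zero _ hb),
    padicValInt.mul (by norm_num) (pow_ne_zero _ hc),
    padicValInt.mul (pow_ne_zero _ hd) hS,
    padicValInt_pow' p hc, padicValInt_pow' p hb, padicValInt_pow' p hd] at h1
  omega

lemma coprime_not_dvd {a b : ℤ} (hcop : IsCoprime a b) {p : ℕ} (hp : p.Prime)
    (hpb : (p : ℤ) ∣ b) : ¬ (p : ℤ) ∣ a := by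
  intro hpa
  have hu := hcop.isUnit_of_dvd' hpa hpb
  rw [Int.isUnit_iff] at hu
  have h2 : (2 : ℤ) ≤ (p : ℤ) := by exact_mod_cast hp.two_le
  rcases hu with h | h <;> omega

lemma zmod_16 : (16 : ZMod 5) = 1 := by decide
lemma zmod_cast5 : ((5 : ℤ) : ZMod 5) = 0 := by decide
lemma zmod_5 : (5 : ZMod 5) = 0 := by decide
lemma zmod_key : ∀ x y : ZMod 5, y ≠ 0 → x ^ 2 ≠ 2 * y ^ 2 := by decide

lemma main_int (a b c d : ℤ) (hcop : IsCoprime a b) (hcd : IsCoprime c d)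
    (hb0 : b ≠ 0) (hd0 : d ≠ 0)
    (E : 5 * c ^ 2 * b ^ 5 = d ^ 2 * (16 * a ^ 5 + b ^ 5)) :
    Odd (padicValInt 5 b) ∧ Even (padicValInt 2 b) ∧
    ∀ p : ℕ, p.Prime → p ≠ 2 → p ≠ 5 → Even (padicValInt p b) := by
  haveI : Fact (Nat.Prime 2) := ⟨by norm_num⟩
  haveI : Fact (Nat.Prime 5) := ⟨by norm_num⟩
  -- c ≠ 0
  have hc0 : c ≠ 0 := by
    intro hc
    rw [hc] at E
    have hS0 : 16 * a ^ 5 + b ^ 5 = 0 := by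
      rcases mul_eq_zero.mp (by linear_combination -E : d ^ 2 * (16 * a ^ 5 + b ^ 5) = 0)
        with h1 | h1
      · exact absurd h1 (pow_ne_zero _ hd0)
      · exact h1
    have ha0 : a ≠ 0 := by
      intro ha; rw [ha] at hS0; simp at hS0; exact hb0 hS0
    have h16 : (16 : ℤ) * a ^ 5 = (-b) ^ 5 := by linear_combination hS0
    have hv := congrArg (padicValInt 2) h16
    rw [padicValInt.mul (by norm_num) (pow_ne_zero _ ha0),
      padicValInt_pow' 2 ha0, padicValInt_pow' 2 (neg_ne_zero.mpr hb0),
      padicValInt_two_16, show padicValInt 2 (-b) = padicValInt 2 b by simp [padicValInt]] at hv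
    by_cases h2b : (2 : ℤ) ∣ b
    · have hna := coprime_not_dvd hcop (by norm_num) h2b
      have : padicValInt 2 a = 0 := padicValInt.eq_zero_of_not_dvd hna
      omega
    · have : padicValInt 2 b = 0 := padicValInt.eq_zero_of_not_dvd h2b
      omega
  -- 5 ∣ b
  have hb5 : (5 : ℤ) ∣ b := by
    by_contra h5b
    have h5d : ¬ (5 : ℤ) ∣ d := by
      intro h5d
      obtain ⟨k, hk⟩ := h5d
      have h5c : (5 : ℤ) ∣ c ^ 2 * b ^ 5 := by
        refine ⟨k ^ 2 * (16 * a ^ 5 + b ^ 5), ?_⟩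
        have : (5 : ℤ) * (5 * (k ^ 2 * (16 * a ^ 5 + b ^ 5))) = 5 * (c ^ 2 * b ^ 5) := by
          linear_combination -E - (16 * a ^ 5 + b ^ 5) * (d + 5 * k) * hk
        exact (mul_left_cancel₀ (by norm_num : (5:ℤ) ≠ 0) this).symm
      rcases Int.Prime.dvd_mul' (by norm_num) h5c with h1 | h1
      · exact coprime_not_dvd hcd (by norm_num) ⟨k, hk⟩
          (Int.Prime.dvd_pow' (by norm_num) h1)
      · exact h5b (Int.Prime.dvd_pow' (by norm_num) h1)
    have h5S : (5 : ℤ) ∣ 16 * a ^ 5 + b ^ 5 := by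
      have h5L : (5 : ℤ) ∣ d ^ 2 * (16 * a ^ 5 + b ^ 5) := ⟨c ^ 2 * b ^ 5, by linarith [E]⟩
      rcases Int.Prime.dvd_mul' (by norm_num) h5L with h1 | h1
      · exact absurd (Int.Prime.dvd_pow' (by norm_num) h1) h5d
      · exact h1
    -- reduce mod 5 : a ≡ -b
    have hab : (5 : ℤ) ∣ a + b := by
      have h1 := (ZMod.intCast_zmod_eq_zero_iff_dvd (16 * a ^ 5 + b ^ 5) 5).mpr h5S
      push_cast at h1
      rw [ZMod.pow_card, ZMod.pow_card] at h1
      rw [zmod_16, one_mul] at h1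
      exact (ZMod.intCast_zmod_eq_zero_iff_dvd (a + b) 5).mp (by push_cast; exact h1)
    obtain ⟨t, ht⟩ := hab
    have ha_eq : a = 5 * t - b := by linarith
    obtain ⟨m, hS_eq⟩ : ∃ m : ℤ, 16 * a ^ 5 + b ^ 5 = -15 * b ^ 5 + 25 * m :=
      ⟨16 * (b ^ 4 * t - 10 * b ^ 3 * t ^ 2 + 50 * b ^ 2 * t ^ 3 - 125 * b * t ^ 4
        + 125 * t ^ 5), by rw [ha_eq]; ring⟩
    have E2 : c ^ 2 * b ^ 5 = d ^ 2 * (-3 * b ^ 5 + 5 * m) := by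
      have h5 : (5 : ℤ) * (c ^ 2 * b ^ 5) = 5 * (d ^ 2 * (-3 * b ^ 5 + 5 * m)) := by
        linear_combination E + d ^ 2 * hS_eq
      exact mul_left_cancel₀ (by norm_num) h5
    have hzb : (b : ZMod 5) ≠ 0 := fun hz => h5b ((ZMod.intCast_zmod_eq_zero_iff_dvd b 5).mp hz)
    have hzd : (d : ZMod 5) ≠ 0 := fun hz => h5d ((ZMod.intCast_zmod_eq_zero_iff_dvd d 5).mp hz)
    have hz : (c : ZMod 5) ^ 2 * (b : ZMod 5) ^ 5
        = (d : ZMod 5) ^ 2 * (-3 * (b : ZMod 5) ^ 5 + 5 * (m : ZMod 5)) := by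
      have := congrArg (Int.cast : ℤ → ZMod 5) E2
      push_cast at this
      exact this
    have hz2 : (c : ZMod 5) ^ 2 = 2 * (d : ZMod 5) ^ 2 := by
      have hb5z : (b : ZMod 5) ^ 5 ≠ 0 := pow_ne_zero _ hzb
      refine mul_right_cancel₀ hb5z ?_
      linear_combination hz + (d : ZMod 5) ^ 2 * ((m : ZMod 5) - (b : ZMod 5) ^ 5) * zmod_5
    exact zmod_key _ _ hzd hz2
  -- with 5 ∣ b, the valuation bookkeeping
  have h5a : ¬ (5 : ℤ) ∣ a := coprime_not_dvd hcop (by norm_num) hb5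
  refine ⟨?_, ?_, ?_⟩
  · -- 5-adic valuation of b is odd
    have h5S : ¬ (5 : ℤ) ∣ (16 * a ^ 5 + b ^ 5) := by
      intro hdvd
      have hb5' : (5 : ℤ) ∣ b ^ 5 := hb5.pow (by norm_num)
      have h1 : (5 : ℤ) ∣ 16 * a ^ 5 := by
        have := dvd_sub hdvd hb5'
        rwa [add_sub_cancel_right] at this
      rcases Int.Prime.dvd_mul' (by norm_num) h1 with h2 | h2
      · norm_num at h2
      · exact h5a (Int.Prime.dvd_pow' (by norm_num) h2)
    have hS0 : (16 * a ^ 5 + b ^ 5) ≠ 0 := fun h0 => h5S (h0 ▸ dvd_zero _)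
    have hv := aux_val 5 hc0 hb0 hd0 hS0 E
    rw [padicValInt_five_5, padicValInt.eq_zero_of_not_dvd h5S] at hv
    rw [Nat.odd_iff]
    omega
  · -- 2-adic valuation of b is even
    by_cases h2b : (2 : ℤ) ∣ b
    · obtain ⟨e, he⟩ := h2b
      have h2a : ¬ (2 : ℤ) ∣ a := coprime_not_dvd hcop (by norm_num) ⟨e, he⟩
      have hu_odd : ¬ (2 : ℤ) ∣ (a ^ 5 + 2 * e ^ 5) := by
        intro hdvd
        have h1 : (2 : ℤ) ∣ a ^ 5 := by
          have h2 := dvd_sub hdvd (⟨e ^ 5, by ring⟩ : (2 : ℤ) ∣ 2 * e ^ 5)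
          rwa [add_sub_cancel_right] at h2
        exact h2a (Int.Prime.dvd_pow' (by norm_num) h1)
      have hu0 : a ^ 5 + 2 * e ^ 5 ≠ 0 := fun h0 => hu_odd (h0 ▸ dvd_zero _)
      have hS_eq : 16 * a ^ 5 + b ^ 5 = 16 * (a ^ 5 + 2 * e ^ 5) := by rw [he]; ring
      have E' : 5 * c ^ 2 * b ^ 5 = d ^ 2 * (16 * (a ^ 5 + 2 * e ^ 5)) := by rw [← hS_eq]; exact E
      have hS0 : (16 : ℤ) * (a ^ 5 + 2 * e ^ 5) ≠ 0 := by
        intro h0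
        rcases mul_eq_zero.mp h0 with h1 | h1
        · norm_num at h1
        · exact hu0 h1
      have hv := aux_val 2 hc0 hb0 hd0 hS0 E'
      rw [padicValInt.mul (by norm_num) hu0, padicValInt_two_16,
        padicValInt.eq_zero_of_not_dvd hu_odd,
        padicValInt.eq_zero_of_not_dvd (by norm_num : ¬ (2:ℤ) ∣ 5)] at hv
      rw [Nat.even_iff]
      omega
    · rw [padicValInt.eq_zero_of_not_dvd h2b]
      exact Even.zero
  · -- other primes
    intro p hp hp2 hp5
    haveI : Fact p.Prime := ⟨hp⟩
    by_cases hpb : (p : ℤ) ∣ b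
    · have hpa : ¬ (p : ℤ) ∣ a := coprime_not_dvd hcop hp hpb
      have hpS : ¬ (p : ℤ) ∣ (16 * a ^ 5 + b ^ 5) := by
        intro hdvd
        have hbp : (p : ℤ) ∣ b ^ 5 := hpb.pow (by norm_num)
        have h1 : (p : ℤ) ∣ 16 * a ^ 5 := by
          have := dvd_sub hdvd hbp
          rwa [add_sub_cancel_right] at this
        rcases Int.Prime.dvd_mul' hp h1 with h2 | h2
        · have : (p : ℤ) ∣ (2 : ℤ) ^ 4 := by rwa [show ((2:ℤ))^4 = 16 by norm_num]
          have hpn : p ∣ 2 ^ 4 := by exact_mod_cast this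
          have := (Nat.Prime.dvd_of_dvd_pow hp hpn)
          rw [Nat.prime_dvd_prime_iff_eq hp (by norm_num)] at this
          exact hp2 this
        · exact hpa (Int.Prime.dvd_pow' hp h2)
      have hS0 : (16 * a ^ 5 + b ^ 5) ≠ 0 := fun h0 => hpS (h0 ▸ dvd_zero _)
      have hv := aux_val p hc0 hb0 hd0 hS0 E
      have hp5' : ¬ (p : ℤ) ∣ (5 : ℤ) := by
        intro hd5
        have hpn : p ∣ 5 := by exact_mod_cast hd5
        rw [Nat.prime_dvd_prime_iff_eq hp (by norm_num)] at hpn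
        exact hp5 hpn
      rw [padicValInt.eq_zero_of_not_dvd hp5', padicValInt.eq_zero_of_not_dvd hpS] at hv
      rw [Nat.even_iff]
      omega
    · rw [padicValInt.eq_zero_of_not_dvd hpb]
      exact Even.zero

/-- If `X, Z ∈ ℚ` satisfy `5Z² = 16X⁵ + 1` and `X = a/b` with `a, b` coprime integers,
`b > 0`, then the 5-adic valuation of `b` is odd, the 2-adic valuation of `b` is even,
and the `p`-adic valuation of `b` is even for every prime `p ∉ {2, 5}`. -/
theorem stmt_15 (X Z : ℚ) (h : 5 * Z ^ 2 = 16 * X ^ 5 + 1)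
    (a b : ℤ) (hcop : IsCoprime a b) (hb : 0 < b) (hX : X = (a : ℚ) / (b : ℚ)) :
    Odd (padicValInt 5 b) ∧ Even (padicValInt 2 b) ∧
    ∀ p : ℕ, p.Prime → p ≠ 2 → p ≠ 5 → Even (padicValInt p b) := by
  have hb0 : b ≠ 0 := hb.ne'
  have hd0 : (Z.den : ℤ) ≠ 0 := by exact_mod_cast Z.den_nz
  have hcd : IsCoprime Z.num (Z.den : ℤ) := by
    rw [Int.isCoprime_iff_gcd_eq_one]
    simpa [Int.gcd] using Z.reduced
  have E : 5 * Z.num ^ 2 * b ^ 5 = (Z.den : ℤ) ^ 2 * (16 * a ^ 5 + b ^ 5) := by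
    have hbQ : (b : ℚ) ≠ 0 := Int.cast_ne_zero.mpr hb0
    have hdQ : ((Z.den : ℤ) : ℚ) ≠ 0 := by positivity
    have hZ : Z = (Z.num : ℚ) / ((Z.den : ℤ) : ℚ) := by push_cast; exact (Rat.num_div_den Z).symm
    rw [hX, hZ] at h
    field_simp at h
    have : (5 * Z.num ^ 2 * b ^ 5 : ℚ) = ((Z.den : ℤ) : ℚ) ^ 2 * (16 * a ^ 5 + b ^ 5) := by
      field_simp
      linear_combination h
    exact_mod_cast this
  exact main_int a b Z.num (Z.den : ℤ) hcop hcd hb0 hd0 E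
end

section
/- There do not exist integers a, b, c, d with 5 ∤ ab such that b⁵ − 4a⁵ = 5d² and 16a⁵ + b⁵ = 5c². Indeed, these two congruences already have no simultaneous solution modulo 25 when 5 does not divide ab. -/
private lemma sq5 : ∀ v : ZMod 25, 5 * v ^ 2 = 0 ∨ 5 * v ^ 2 = 5 ∨ 5 * v ^ 2 = 20 := by
  decide

private lemma key : ∀ x y : ZMod 25,
    ZMod.castHom (show (5:ℕ) ∣ 25 by norm_num) (ZMod 5) x ≠ 0 →
    ZMod.castHom (show (5:ℕ) ∣ 25 by norm_num) (ZMod 5) y ≠ 0 →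
    ¬ ((y ^ 5 - 4 * x ^ 5 = 0 ∨ y ^ 5 - 4 * x ^ 5 = 5 ∨ y ^ 5 - 4 * x ^ 5 = 20) ∧
       (16 * x ^ 5 + y ^ 5 = 0 ∨ 16 * x ^ 5 + y ^ 5 = 5 ∨ 16 * x ^ 5 + y ^ 5 = 20)) := by
  decide

private lemma modcase : ¬ ∃ a b c d : ℤ, ¬ (5 : ℤ) ∣ a * b ∧
      b ^ 5 - 4 * a ^ 5 ≡ 5 * d ^ 2 [ZMOD 25] ∧
      16 * a ^ 5 + b ^ 5 ≡ 5 * c ^ 2 [ZMOD 25] := by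
  rintro ⟨a, b, c, d, h5, h1, h2⟩
  have h1' : ((b : ZMod 25)) ^ 5 - 4 * (a : ZMod 25) ^ 5 = 5 * (d : ZMod 25) ^ 2 := by
    have := (ZMod.intCast_eq_intCast_iff _ _ 25).mpr h1
    push_cast at this
    linear_combination this
  have h2' : 16 * (a : ZMod 25) ^ 5 + ((b : ZMod 25)) ^ 5 = 5 * (c : ZMod 25) ^ 2 := by
    have := (ZMod.intCast_eq_intCast_iff _ _ 25).mpr h2
    push_cast at this
    linear_combination this
  have ha : (ZMod.castHom (show (5:ℕ) ∣ 25 by norm_num) (ZMod 5)) ((a : ZMod 25)) ≠ 0 := by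
    rw [map_intCast]
    intro h
    exact h5 (Dvd.dvd.mul_right ((ZMod.intCast_zmod_eq_zero_iff_dvd a 5).mp h) b)
  have hb : (ZMod.castHom (show (5:ℕ) ∣ 25 by norm_num) (ZMod 5)) ((b : ZMod 25)) ≠ 0 := by
    rw [map_intCast]
    intro h
    exact h5 (Dvd.dvd.mul_left ((ZMod.intCast_zmod_eq_zero_iff_dvd b 5).mp h) a)
  refine key _ _ ha hb ⟨?_, ?_⟩
  · rw [h1']; exact sq5 _
  · rw [h2']; exact sq5 _

/-- There are no integers `a, b, c, d` with `5 ∤ ab` such that `b⁵ - 4a⁵ = 5d²` and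
`16a⁵ + b⁵ = 5c²`; indeed these equations have no simultaneous solution modulo `25`
when `5 ∤ ab`. -/
theorem stmt_19 :
    (¬ ∃ a b c d : ℤ, ¬ (5 : ℤ) ∣ a * b ∧
      b ^ 5 - 4 * a ^ 5 = 5 * d ^ 2 ∧ 16 * a ^ 5 + b ^ 5 = 5 * c ^ 2) ∧
    (¬ ∃ a b c d : ℤ, ¬ (5 : ℤ) ∣ a * b ∧
      b ^ 5 - 4 * a ^ 5 ≡ 5 * d ^ 2 [ZMOD 25] ∧
      16 * a ^ 5 + b ^ 5 ≡ 5 * c ^ 2 [ZMOD 25]) := by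
  refine ⟨?_, modcase⟩
  rintro ⟨a, b, c, d, h5, h1, h2⟩
  exact modcase ⟨a, b, c, d, h5, by rw [h1], by rw [h2]⟩
end
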